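/- arXiv:1602.00727 — 10 statements merged into one kernel-verified Lean document; each statement's English description precedes it below -/
import Mathlib

section
/- Let t ∈ (0,1) be fixed. For q ∈ ℝ and y ∈ ℝ define f_q(y) = ∏_{k=1}^∞ 1/(1 + t^{qy + k}). Then f_q(y) is increasing in y for every q > 0 and decreasing in y for every q < 0; moreover, for each δ > 0, f_q(y) converges to the indicator function 1_{y > 0} uniformly on ℝ \ [−δ, δ] as q → ∞. -/
open Filter Set Topology

private lemma auxHasProdExp {a : ℕ → ℝ} {S : ℝ} (h : HasSum a S) :
    HasProd (fun k => Real.exp (a k)) (Real.exp S) := by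
  have h2 := (Real.continuous_exp.tendsto S).comp h
  have : (fun s : Finset ℕ => ∏ i ∈ s, Real.exp (a i))
      = fun s : Finset ℕ => Real.exp (∑ i ∈ s, a i) := by
    funext s; rw [Real.exp_sum]
  simpa [HasProd, this, Function.comp_def] using h2

private lemma auxProdLe {f g : ℕ → ℝ} {A B : ℝ} (h0 : ∀ i, 0 ≤ f i) (hle : ∀ i, f i ≤ g i)
    (hf : HasProd f A) (hg : HasProd g B) : A ≤ B :=
  le_of_tendsto_of_tendsto' hf hg fun s =>
    Finset.prod_le_prod (fun i _ => h0 i) (fun i _ => hle i)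

private lemma auxHasSum {t : ℝ} (ht0 : 0 < t) (ht1 : t < 1) (e : ℝ) :
    HasSum (fun k : ℕ => t ^ (e + (k + 1 : ℝ))) (t ^ (e + 1) * (1 - t)⁻¹) := by
  have h := (hasSum_geometric_of_lt_one ht0.le ht1).mul_left (t ^ (e + 1) : ℝ)
  have heq : (fun k : ℕ => t ^ (e + (k + 1 : ℝ))) = fun k : ℕ => t ^ (e + 1) * t ^ k := by
    funext k
    rw [show e + ((k : ℝ) + 1) = (e + 1) + (k : ℝ) by ring, Real.rpow_add ht0,
      Real.rpow_natCast]
  rw [heq]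
  exact h

private lemma auxPos {t : ℝ} (ht0 : 0 < t) (x : ℝ) : 0 < 1 / (1 + t ^ x) := by
  have := Real.rpow_pos_of_pos ht0 x
  positivity

private lemma auxFacLeOne {t : ℝ} (ht0 : 0 < t) (x : ℝ) : 1 / (1 + t ^ x) ≤ 1 := by
  have := Real.rpow_pos_of_pos ht0 x
  rw [div_le_one (by linarith)]
  linarith

private lemma auxMult {t : ℝ} (ht0 : 0 < t) (ht1 : t < 1) (e : ℝ) :
    Multipliable (fun k : ℕ => 1 / (1 + t ^ (e + (k + 1 : ℝ)))) := by
  refine Real.multipliable_of_summable_log (fun k => auxPos ht0 _) ?_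
  have hs : Summable (fun k : ℕ => Real.log (1 + t ^ (e + (k + 1 : ℝ)))) := by
    refine Summable.of_nonneg_of_le (fun k => Real.log_nonneg (by
      have := (Real.rpow_pos_of_pos ht0 (e + (k + 1 : ℝ))).le; linarith))
      (fun k => ?_) (auxHasSum ht0 ht1 e).summable
    have h := Real.log_le_sub_one_of_pos
      (x := 1 + t ^ (e + (k + 1 : ℝ)))
      (by have := (Real.rpow_pos_of_pos ht0 (e + (k + 1 : ℝ))); linarith)
    linarith
  have : (fun k : ℕ => Real.log (1 / (1 + t ^ (e + (k + 1 : ℝ)))))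
      = fun k : ℕ => -Real.log (1 + t ^ (e + (k + 1 : ℝ))) := by
    funext k; rw [one_div, Real.log_inv]
  rw [this]
  exact hs.neg

private lemma auxLeOne {t : ℝ} (ht0 : 0 < t) (ht1 : t < 1) (e : ℝ) :
    (∏' k : ℕ, 1 / (1 + t ^ (e + (k + 1 : ℝ)))) ≤ 1 :=
  auxProdLe (fun k => (auxPos ht0 _).le) (fun k => auxFacLeOne ht0 _)
    (auxMult ht0 ht1 e).hasProd hasProd_one

private lemma auxNonneg {t : ℝ} (ht0 : 0 < t) (ht1 : t < 1) (e : ℝ) :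
    0 ≤ ∏' k : ℕ, 1 / (1 + t ^ (e + (k + 1 : ℝ))) :=
  ge_of_tendsto' (auxMult ht0 ht1 e).hasProd fun s =>
    Finset.prod_nonneg fun k _ => (auxPos ht0 _).le

private lemma auxLower {t : ℝ} (ht0 : 0 < t) (ht1 : t < 1) (e : ℝ) :
    1 - t ^ (e + 1) * (1 - t)⁻¹ ≤ ∏' k : ℕ, 1 / (1 + t ^ (e + (k + 1 : ℝ))) := by
  set S := t ^ (e + 1) * (1 - t)⁻¹ with hS
  have h1 : Real.exp (-S) ≤ ∏' k : ℕ, 1 / (1 + t ^ (e + (k + 1 : ℝ))) := by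
    refine auxProdLe (fun k => (Real.exp_pos _).le) (fun k => ?_)
      (auxHasProdExp (auxHasSum ht0 ht1 e).neg) (auxMult ht0 ht1 e).hasProd
    have ha := Real.rpow_pos_of_pos ht0 (e + (k + 1 : ℝ))
    have h2 := Real.add_one_le_exp (t ^ (e + (k + 1 : ℝ)))
    rw [Real.exp_neg, ← one_div]
    exact one_div_le_one_div_of_le (by linarith) (by linarith)
  have h3 := Real.add_one_le_exp (-S)
  linarith

set_option maxHeartbeats 1000000 in
private lemma auxHead {t : ℝ} (ht0 : 0 < t) (ht1 : t < 1) (e : ℝ) :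
    (∏' k : ℕ, 1 / (1 + t ^ (e + (k + 1 : ℝ)))) ≤ 1 / (1 + t ^ (e + 1)) := by
  have hshift : (fun k : ℕ => 1 / (1 + t ^ (e + ((k + 1 : ℕ) + 1 : ℝ))))
      = fun k : ℕ => 1 / (1 + t ^ ((e + 1) + (k + 1 : ℝ))) := by
    funext k; push_cast
    rw [show e + ((k : ℝ) + 1 + 1) = (e + 1) + ((k : ℝ) + 1) by ring]
  have hm : Multipliable (fun k : ℕ => 1 / (1 + t ^ (e + ((k + 1 : ℕ) + 1 : ℝ)))) := by
    rw [hshift]; exact auxMult ht0 ht1 (e + 1)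
  rw [tprod_eq_zero_mul' (f := fun k : ℕ => 1 / (1 + t ^ (e + (k + 1 : ℝ)))) hm]
  have h0 : (1 : ℝ) / (1 + t ^ (e + ((0 : ℕ) + 1 : ℝ))) = 1 / (1 + t ^ (e + 1)) := by
    norm_num
  rw [h0]
  have hT1 : (∏' k : ℕ, 1 / (1 + t ^ (e + ((k + 1 : ℕ) + 1 : ℝ)))) ≤ 1 := by
    rw [hshift]; exact auxLeOne ht0 ht1 (e + 1)
  calc (1 / (1 + t ^ (e + 1))) * ∏' k : ℕ, 1 / (1 + t ^ (e + ((k + 1 : ℕ) + 1 : ℝ)))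
      ≤ (1 / (1 + t ^ (e + 1))) * 1 :=
        mul_le_mul_of_nonneg_left hT1 (auxPos ht0 _).le
    _ = 1 / (1 + t ^ (e + 1)) := mul_one _

theorem stmt_0 (t : ℝ) (ht : t ∈ Set.Ioo (0:ℝ) 1)
    (f : ℝ → ℝ → ℝ)
    (hf : ∀ q y : ℝ, f q y = ∏' k : ℕ, 1 / (1 + t ^ (q * y + (k + 1 : ℝ)))) :
    (∀ q : ℝ, 0 < q → Monotone (f q)) ∧
    (∀ q : ℝ, q < 0 → Antitone (f q)) ∧
    (∀ δ : ℝ, 0 < δ →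
      TendstoUniformlyOn (fun q y => f q y)
        (fun y => if 0 < y then 1 else 0) atTop ((Set.Icc (-δ) δ)ᶜ)) := by
  obtain ⟨ht0, ht1⟩ := ht
  have hmono : ∀ q y₁ y₂ : ℝ, q * y₁ ≤ q * y₂ → f q y₁ ≤ f q y₂ := by
    intro q y₁ y₂ h
    rw [hf, hf]
    refine auxProdLe (fun k => (auxPos ht0 _).le) (fun k => ?_)
      (auxMult ht0 ht1 (q * y₁)).hasProd (auxMult ht0 ht1 (q * y₂)).hasProd
    have h2 : t ^ (q * y₂ + (k + 1 : ℝ)) ≤ t ^ (q * y₁ + (k + 1 : ℝ)) :=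
      Real.rpow_le_rpow_of_exponent_ge ht0 ht1.le (by linarith)
    have h3 := Real.rpow_pos_of_pos ht0 (q * y₁ + (k + 1 : ℝ))
    have h4 := Real.rpow_pos_of_pos ht0 (q * y₂ + (k + 1 : ℝ))
    exact one_div_le_one_div_of_le (by linarith) (by linarith)
  refine ⟨fun q hq y₁ y₂ h => hmono q y₁ y₂ (by nlinarith),
    fun q hq y₁ y₂ h => hmono q y₂ y₁ (by nlinarith), ?_⟩
  intro δ hδ
  rw [Metric.tendstoUniformlyOn_iff]
  intro ε hε
  set K : ℝ := max ((1 - t)⁻¹) (1 / t) with hK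
  have hKpos : 0 < K := lt_max_of_lt_right (by positivity)
  have htend : Tendsto (fun q : ℝ => K * t ^ (q * δ)) atTop (𝓝 0) := by
    have h1 : Tendsto (fun q : ℝ => t ^ (q * δ)) atTop (𝓝 0) :=
      (tendsto_rpow_atTop_of_base_lt_one t (by linarith) ht1).comp
        (Tendsto.atTop_mul_const hδ tendsto_id)
    simpa using h1.const_mul K
  have hev : ∀ᶠ q : ℝ in atTop, K * t ^ (q * δ) < ε :=
    htend.eventually_lt_const hε
  filter_upwards [hev, eventually_gt_atTop (0 : ℝ)] with q hqε hq0 y hy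
  simp only [Set.mem_compl_iff, Set.mem_Icc, not_and_or, not_le] at hy
  have htq : 0 < t ^ (q * δ) := Real.rpow_pos_of_pos ht0 _
  rcases hy with hy | hy
  · -- y < -δ
    have hy0 : ¬ (0 < y) := by push_neg; nlinarith
    rw [if_neg hy0, Real.dist_eq]
    have hfy0 : 0 ≤ f q y := by rw [hf]; exact auxNonneg ht0 ht1 _
    have h1 : f q y ≤ 1 / (1 + t ^ (q * y + 1)) := by rw [hf]; exact auxHead ht0 ht1 _
    have he : q * y + 1 ≤ 1 - q * δ := by nlinarith
    have h2 : t ^ ((1 : ℝ) - q * δ) ≤ t ^ (q * y + 1) :=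
      Real.rpow_le_rpow_of_exponent_ge ht0 ht1.le he
    have h3 : t ^ ((1 : ℝ) - q * δ) = t / t ^ (q * δ) := by
      rw [Real.rpow_sub ht0, Real.rpow_one]
    have h4 : f q y ≤ 1 / (t / t ^ (q * δ)) := by
      refine h1.trans ?_
      refine one_div_le_one_div_of_le (by rw [← h3]; positivity) ?_
      rw [← h3]; linarith
    have h5 : 1 / (t / t ^ (q * δ)) = (1 / t) * t ^ (q * δ) := by
      field_simp
    have h6 : (1 / t) * t ^ (q * δ) ≤ K * t ^ (q * δ) :=
      mul_le_mul_of_nonneg_right (le_max_right _ _) htq.le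
    rw [abs_of_nonpos (by linarith)]
    rw [h5] at h4
    calc -(0 - f q y) = f q y := by ring
      _ ≤ K * t ^ (q * δ) := by linarith
      _ < ε := hqε
  · -- δ < y
    have hy0 : 0 < y := lt_trans hδ hy
    rw [if_pos hy0, Real.dist_eq]
    have hfy1 : f q y ≤ 1 := by rw [hf]; exact auxLeOne ht0 ht1 _
    have h1 : 1 - t ^ (q * y + 1) * (1 - t)⁻¹ ≤ f q y := by
      rw [hf]; exact auxLower ht0 ht1 _
    have he : q * δ ≤ q * y + 1 := by nlinarith
    have h2 : t ^ (q * y + 1) ≤ t ^ (q * δ) :=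
      Real.rpow_le_rpow_of_exponent_ge ht0 ht1.le he
    have h3 : t ^ (q * y + 1) * (1 - t)⁻¹ ≤ t ^ (q * δ) * K := by
      have : (0:ℝ) ≤ (1 - t)⁻¹ := by
        have h1t : (0:ℝ) < 1 - t := by linarith
        positivity
      calc t ^ (q * y + 1) * (1 - t)⁻¹ ≤ t ^ (q * δ) * (1 - t)⁻¹ :=
            mul_le_mul_of_nonneg_right h2 this
        _ ≤ t ^ (q * δ) * K := mul_le_mul_of_nonneg_left (le_max_left _ _) htq.le
    rw [abs_of_nonneg (by linarith)]
    calc 1 - f q y ≤ t ^ (q * y + 1) * (1 - t)⁻¹ := by linarith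
      _ ≤ t ^ (q * δ) * K := h3
      _ = K * t ^ (q * δ) := mul_comm _ _
      _ < ε := hqε
end

section
/- For t ∈ (0,1) and x ≥ 0 define g_t(x) = ∏_{k=1}^∞ 1/(1 + (1−t) x t^k). Then g_t(x) → e^{−x} uniformly on [0,∞) as t → 1⁻. -/
open Filter Set

open Real in
lemma stmt_1_key (t x : ℝ) (ht0 : 0 < t) (ht1 : t < 1) (hx : 0 ≤ x) :
    ∃ S : ℝ, (∏' k : ℕ, 1 / (1 + (1 - t) * x * t ^ (k + 1))) = Real.exp (-S)
      ∧ t * x / (1 + (1 - t) * x) ≤ S ∧ S ≤ t * x := by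
  set u : ℕ → ℝ := fun k => (1 - t) * x * t ^ (k + 1) with hu_def
  have ht01 : 0 < 1 - t := by linarith
  have hu_nonneg : ∀ k, 0 ≤ u k := fun k => by
    have := pow_nonneg ht0.le (k + 1)
    positivity
  have hu_le : ∀ k, u k ≤ u 0 := by
    intro k
    have : t ^ (k + 1) ≤ t ^ (0 + 1) := pow_le_pow_of_le_one ht0.le ht1.le (by omega)
    have hn : 0 ≤ (1 - t) * x := by positivity
    simpa [hu_def] using mul_le_mul_of_nonneg_left this hn
  have hpos : ∀ k, 0 < 1 + u k := fun k => by linarith [hu_nonneg k]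
  have hu_sum : Summable u := by
    have h := (summable_geometric_of_lt_one ht0.le ht1).mul_left ((1 - t) * x * t)
    apply h.congr
    intro k
    simp [hu_def, pow_succ, pow_mul_comm]
    ring
  have hu_tsum : ∑' k, u k = t * x := by
    have h : ∀ k, u k = ((1 - t) * x * t) * t ^ k := fun k => by
      simp [hu_def]; ring
    rw [tsum_congr h, tsum_mul_left, tsum_geometric_of_lt_one ht0.le ht1]
    field_simp
  have hlog_le : ∀ k, Real.log (1 + u k) ≤ u k := fun k => by
    have := Real.log_le_sub_one_of_pos (hpos k)
    linarith
  have hlog_ge : ∀ k, u k / (1 + u 0) ≤ Real.log (1 + u k) := by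
    intro k
    have h1 : Real.log ((1 + u k)⁻¹) ≤ (1 + u k)⁻¹ - 1 :=
      Real.log_le_sub_one_of_pos (by positivity)
    rw [Real.log_inv] at h1
    have h4 : 1 - (1 + u k)⁻¹ = u k / (1 + u k) := by
      rw [inv_eq_one_div, one_sub_div (hpos k).ne']; ring
    have h2 : u k / (1 + u k) ≤ Real.log (1 + u k) := by linarith
    have h3 : u k / (1 + u 0) ≤ u k / (1 + u k) :=
      div_le_div_of_nonneg_left (hu_nonneg k) (hpos k) (by linarith [hu_le k])
    linarith
  have hlog_nonneg : ∀ k, 0 ≤ Real.log (1 + u k) := fun k =>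
    Real.log_nonneg (by linarith [hu_nonneg k])
  have hlog_sum : Summable (fun k => Real.log (1 + u k)) :=
    Summable.of_nonneg_of_le hlog_nonneg hlog_le hu_sum
  set S := ∑' k, Real.log (1 + u k) with hS_def
  refine ⟨S, ?_, ?_, ?_⟩
  · have h1 : HasSum (fun k => -(Real.log (1 + u k))) (-S) := hlog_sum.hasSum.neg
    have h2 := h1.rexp
    have h3 : (rexp ∘ fun k => -(Real.log (1 + u k))) = fun k => 1 / (1 + u k) := by
      funext k
      simp [Function.comp, Real.exp_neg, Real.exp_log (hpos k)]
    rw [h3] at h2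
    exact h2.tprod_eq
  · have h1 : ∑' k, u k / (1 + u 0) ≤ S :=
      Summable.tsum_le_tsum hlog_ge (hu_sum.div_const _) hlog_sum
    rw [tsum_div_const, hu_tsum] at h1
    have hu0 : u 0 = (1 - t) * x * t := by simp [hu_def]
    have hd1 : (0:ℝ) < 1 + (1 - t) * x * t := by positivity
    have hd2 : (0:ℝ) < 1 + (1 - t) * x := by positivity
    have h2 : t * x / (1 + (1 - t) * x) ≤ t * x / (1 + (1 - t) * x * t) := by
      apply div_le_div_of_nonneg_left (by positivity) hd1
      nlinarith [mul_nonneg ht01.le hx]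
    rw [hu0] at h1
    linarith
  · have h1 : S ≤ ∑' k, u k := Summable.tsum_le_tsum hlog_le hlog_sum hu_sum
    rwa [hu_tsum] at h1

set_option maxHeartbeats 1000000 in
theorem stmt_1 :
    TendstoUniformlyOn
      (fun (t : ℝ) (x : ℝ) => ∏' k : ℕ, 1 / (1 + (1 - t) * x * t ^ (k + 1)))
      (fun x => Real.exp (-x)) (nhdsWithin 1 (Set.Ioo (0:ℝ) 1)) (Set.Ici (0:ℝ)) := by
  rw [Metric.tendstoUniformlyOn_iff]
  intro ε hε
  set M : ℝ := max 0 (-2 * Real.log ε) + 1 with hM_def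
  have hM1 : (1:ℝ) ≤ M := by
    have := le_max_left (0:ℝ) (-2 * Real.log ε); linarith
  have hM0 : (0:ℝ) < M := by linarith
  have hMlog : -2 * Real.log ε < M := by
    have := le_max_right (0:ℝ) (-2 * Real.log ε); linarith
  have hlog1ε : 0 < Real.log (1 + ε) := Real.log_pos (by linarith)
  set δ : ℝ := min (1 / (M + 2)) (Real.log (1 + ε) / (M * (M + 1) + 1)) with hδ_def
  have hδ0 : 0 < δ := by
    apply lt_min
    · positivity
    · positivity
  have h1 : ∀ᶠ t in nhdsWithin 1 (Set.Ioo (0:ℝ) 1), t ∈ Set.Ioo (1 - δ) (1 + δ) :=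
    eventually_nhdsWithin_of_eventually_nhds
      (eventually_of_mem (Ioo_mem_nhds (by linarith) (by linarith)) fun t ht => ht)
  filter_upwards [h1, eventually_mem_nhdsWithin] with t htδ ht x hx
  simp only [Set.mem_Ici] at hx
  obtain ⟨ht0, ht1⟩ := ht
  obtain ⟨htl, _⟩ := htδ
  have htδ' : 1 - t < δ := by linarith
  have ht01 : 0 < 1 - t := by linarith
  obtain ⟨S, hprod, hSlb, hSub⟩ := stmt_1_key t x ht0 ht1 hx
  rw [hprod, Real.dist_eq]
  have hSx : S ≤ x := le_trans hSub (by nlinarith)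
  have habs : |Real.exp (-x) - Real.exp (-S)| = Real.exp (-S) - Real.exp (-x) := by
    rw [abs_sub_comm, abs_of_nonneg (by linarith [Real.exp_le_exp.mpr (neg_le_neg hSx)])]
  rw [habs]
  set φ : ℝ := t * x / (1 + (1 - t) * x) with hφ_def
  have hD : (0:ℝ) < 1 + (1 - t) * x := by positivity
  rcases le_or_gt x M with hxM | hxM
  · -- small x case
    have key : Real.exp (-S) - Real.exp (-x) ≤ Real.exp (x - φ) - 1 := by
      have h1 : Real.exp (-S) - Real.exp (-x) = Real.exp (-x) * (Real.exp (x - S) - 1) := by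
        rw [mul_sub, ← Real.exp_add]; ring_nf
      rw [h1]
      have h2 : Real.exp (-x) * (Real.exp (x - S) - 1) ≤ Real.exp (x - S) - 1 := by
        apply mul_le_of_le_one_left
        · linarith [Real.exp_le_exp.mpr (by linarith : (0:ℝ) ≤ x - S), Real.exp_zero]
        · calc Real.exp (-x) ≤ Real.exp 0 := Real.exp_le_exp.mpr (by linarith)
            _ = 1 := Real.exp_zero
      have h3 : Real.exp (x - S) ≤ Real.exp (x - φ) := Real.exp_le_exp.mpr (by linarith)
      linarith
    have hxφ : x - φ ≤ (1 - t) * x * (1 + x) := by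
      have heq : x - φ = (1 - t) * x * (1 + x) / (1 + (1 - t) * x) := by
        rw [hφ_def]; field_simp; ring
      rw [heq]
      exact div_le_self (by positivity) (by nlinarith)
    have hxφ2 : x - φ < Real.log (1 + ε) := by
      have hA : x * (1 + x) ≤ M * (M + 1) := by nlinarith
      have hb : (1 - t) * x * (1 + x) ≤ δ * (M * (M + 1)) := by
        nlinarith [mul_le_mul htδ'.le hA (by positivity : (0:ℝ) ≤ x * (1 + x)) hδ0.le]
      have hδ2 : δ ≤ Real.log (1 + ε) / (M * (M + 1) + 1) := min_le_right _ _
      have : δ * (M * (M + 1)) < Real.log (1 + ε) := by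
        rw [le_div_iff₀ (by positivity)] at hδ2  -- δ * (M*(M+1)+1) ≤ log(1+ε)
        nlinarith
      linarith
    have : Real.exp (x - φ) < 1 + ε := by
      calc Real.exp (x - φ) < Real.exp (Real.log (1 + ε)) := Real.exp_lt_exp.mpr hxφ2
        _ = 1 + ε := Real.exp_log (by linarith)
    linarith [Real.exp_pos (-x)]
  · -- large x case
    have hφM : M / 2 ≤ φ := by
      have hDM : (0:ℝ) < 1 + (1 - t) * M := by positivity
      have hδ1 : δ ≤ 1 / (M + 2) := min_le_left _ _
      have ht2 : (1 - t) * (M + 2) ≤ 1 := by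
        have h5 : 1 - t < 1 / (M + 2) := lt_of_lt_of_le htδ' hδ1
        rw [lt_div_iff₀ (by linarith : (0:ℝ) < M + 2)] at h5
        linarith
      have hφM1 : t * M / (1 + (1 - t) * M) ≤ φ := by
        rw [hφ_def, div_le_div_iff₀ hDM hD]
        nlinarith [mul_le_mul_of_nonneg_left hxM.le ht0.le]
      have hφM2 : M / 2 ≤ t * M / (1 + (1 - t) * M) := by
        rw [div_le_div_iff₀ (by norm_num) hDM]
        nlinarith [mul_le_mul_of_nonneg_right ht2 hM0.le]
      linarith
    have h1 : Real.exp (-S) ≤ Real.exp (-(M / 2)) :=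
      Real.exp_le_exp.mpr (by linarith)
    have h2 : Real.exp (-(M / 2)) < ε := by
      rw [← Real.exp_log hε]
      apply Real.exp_lt_exp.mpr
      linarith
    linarith [Real.exp_pos (-x)]
end

section
/- Let f_n : ℝ → [0,1] be a sequence of functions such that each f_n is strictly decreasing with limit 1 at −∞ and 0 at +∞, and such that for each δ > 0, f_n → 1_{y < 0} uniformly on ℝ \ [−δ, δ]. Let X_n be random variables such that for each x ∈ ℝ, E[f_n(X_n − x)] → p(x), where p is a continuous probability distribution function. Then X_n converges in distribution to a random variable X with P(X < x) = p(x). -/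
open Filter MeasureTheory Set
open scoped NNReal ENNReal


lemma cdf_tendsto
    {Ω : ℕ → Type*} [∀ n, MeasurableSpace (Ω n)]
    (μ : ∀ n, Measure (Ω n)) [∀ n, IsProbabilityMeasure (μ n)]
    (X : ∀ n, Ω n → ℝ) (hXm : ∀ n, Measurable (X n))
    (f : ℕ → ℝ → ℝ)
    (hf01 : ∀ n x, f n x ∈ Set.Icc (0:ℝ) 1)
    (hanti : ∀ n, StrictAnti (f n))
    (hfU : ∀ δ : ℝ, 0 < δ →
      TendstoUniformlyOn f (fun y => if y < 0 then 1 else 0) atTop ((Set.Icc (-δ) δ)ᶜ))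
    (p : ℝ → ℝ) (hp : Continuous p) (hpmono : Monotone p)
    (hconv : ∀ x : ℝ,
      Tendsto (fun n => ∫ ω, f n (X n ω - x) ∂(μ n)) atTop (nhds (p x)))
    (t : ℝ) :
    Tendsto (fun n => ((μ n) ((X n) ⁻¹' Set.Iic t)).toReal) atTop (nhds (p t)) := by
  have hmeas : ∀ n (c : ℝ), Measurable (fun ω => f n (X n ω - c)) := fun n c =>
    ((hanti n).antitone.measurable).comp ((hXm n).sub_const c)
  have hint : ∀ n (c : ℝ), Integrable (fun ω => f n (X n ω - c)) (μ n) := by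
    intro n c
    refine Integrable.mono' (integrable_const 1) (hmeas n c).aestronglyMeasurable ?_
    filter_upwards with ω
    rw [Real.norm_eq_abs, abs_le]
    exact ⟨le_trans (by norm_num) (hf01 n _).1, (hf01 n _).2⟩
  have hAmeas : ∀ n, MeasurableSet ((X n) ⁻¹' Set.Iic t) := fun n =>
    (hXm n) measurableSet_Iic
  have hF01 : ∀ n, ((μ n) ((X n) ⁻¹' Set.Iic t)).toReal ∈ Set.Icc (0:ℝ) 1 := by
    intro n
    constructor
    · exact ENNReal.toReal_nonneg
    · rw [← ENNReal.toReal_one]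
      exact ENNReal.toReal_mono ENNReal.one_ne_top (prob_le_one)
  rw [Metric.tendsto_atTop]
  intro ε hε
  set e : ℝ := min (ε/4) (1/2) with he_def
  have hepos : 0 < e := lt_min (by linarith) (by norm_num)
  have he1 : e ≤ 1/2 := min_le_right _ _
  have heε : e ≤ ε/4 := min_le_left _ _
  -- continuity of p at t
  obtain ⟨δ', hδ'pos, hδ'⟩ := Metric.continuousAt_iff.1 (hp.continuousAt (x := t)) e hepos
  set δ : ℝ := δ'/2 with hδ_def
  have hδpos : 0 < δ := by positivity
  have hpt1 : |p (t + δ) - p t| < e := by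
    have := hδ' (x := t + δ) (by rw [Real.dist_eq]; rw [show t + δ - t = δ by ring, abs_of_nonneg hδpos.le]; linarith)
    rwa [Real.dist_eq] at this
  have hpt2 : |p (t - δ) - p t| < e := by
    have := hδ' (x := t - δ) (by rw [Real.dist_eq]; rw [show t - δ - t = -δ by ring, abs_neg, abs_of_nonneg hδpos.le]; linarith)
    rwa [Real.dist_eq] at this
  -- uniform convergence event
  have hU := Metric.tendstoUniformlyOn_iff.1 (hfU (δ/2) (by positivity)) e hepos
  have hB := Metric.tendsto_nhds.1 (hconv (t - δ)) e hepos
  have hC := Metric.tendsto_nhds.1 (hconv (t + δ)) e hepos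
  have hall : ∀ᶠ n in atTop, dist (((μ n) ((X n) ⁻¹' Set.Iic t)).toReal) (p t) < ε := by
    filter_upwards [hU, hB, hC] with n hUn hBn hCn
    rw [Real.dist_eq] at hBn hCn ⊢
    rw [abs_sub_lt_iff]
    set F : ℝ := ((μ n) ((X n) ⁻¹' Set.Iic t)).toReal with hF_def
    have hind_int : Integrable (Set.indicator ((X n) ⁻¹' Set.Iic t) (1 : Ω n → ℝ)) (μ n) :=
      (integrable_const (1:ℝ)).indicator (hAmeas n)
    -- lower bound: F ≥ p t - 3 e
    have hlow : p (t - δ) - e ≤ F + e := by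
      have hptwise : ∀ ω, f n (X n ω - (t - δ)) ≤
          Set.indicator ((X n) ⁻¹' Set.Iic t) (1 : Ω n → ℝ) ω + e := by
        intro ω
        by_cases hω : X n ω ≤ t
        · rw [Set.indicator_of_mem (show ω ∈ (X n) ⁻¹' Set.Iic t from hω)]
          simp only [Pi.one_apply]
          have := (hf01 n (X n ω - (t-δ))).2
          linarith
        · rw [Set.indicator_of_notMem (show ω ∉ (X n) ⁻¹' Set.Iic t from hω)]
          push_neg at hω
          have hy : X n ω - (t - δ) ∈ (Set.Icc (-(δ/2)) (δ/2))ᶜ := by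
            simp only [Set.mem_compl_iff, Set.mem_Icc, not_and, not_le]
            intro _; linarith
          have := hUn _ hy
          rw [if_neg (by push_neg; linarith)] at this
          rw [Real.dist_eq, abs_sub_comm, abs_sub_lt_iff] at this
          linarith [this.1]
      have hintegral : ∫ ω, f n (X n ω - (t - δ)) ∂(μ n) ≤ F + e := by
        have h1 : Integrable (fun ω => Set.indicator ((X n) ⁻¹' Set.Iic t) (1 : Ω n → ℝ) ω + e) (μ n) :=
          hind_int.add (integrable_const e)
        calc ∫ ω, f n (X n ω - (t - δ)) ∂(μ n)
            ≤ ∫ ω, (Set.indicator ((X n) ⁻¹' Set.Iic t) (1 : Ω n → ℝ) ω + e) ∂(μ n) :=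
              integral_mono (hint n _) h1 hptwise
          _ = F + e := by
              rw [integral_add hind_int (integrable_const e),
                integral_const, integral_indicator_one (hAmeas n), measureReal_def]
              simp [hF_def]
      linarith [abs_sub_lt_iff.1 hBn]
    -- upper bound
    have hhigh : (1 - e) * F ≤ p (t + δ) + e := by
      have hptwise : ∀ ω, (1 - e) * Set.indicator ((X n) ⁻¹' Set.Iic t) (1 : Ω n → ℝ) ω ≤
          f n (X n ω - (t + δ)) := by
        intro ω
        by_cases hω : X n ω ≤ t
        · rw [Set.indicator_of_mem (show ω ∈ (X n) ⁻¹' Set.Iic t from hω)]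
          simp only [Pi.one_apply]
          have hy : X n ω - (t + δ) ∈ (Set.Icc (-(δ/2)) (δ/2))ᶜ := by
            simp only [Set.mem_compl_iff, Set.mem_Icc, not_and, not_le]
            intro h; linarith
          have := hUn _ hy
          rw [if_pos (by linarith)] at this
          rw [Real.dist_eq, abs_sub_lt_iff] at this
          have := this.1
          linarith
        · rw [Set.indicator_of_notMem (show ω ∉ (X n) ⁻¹' Set.Iic t from hω)]
          have := (hf01 n (X n ω - (t+δ))).1
          linarith
      have hintegral : (1 - e) * F ≤ ∫ ω, f n (X n ω - (t + δ)) ∂(μ n) := by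
        have h1 : Integrable (fun ω => (1-e) * Set.indicator ((X n) ⁻¹' Set.Iic t) (1 : Ω n → ℝ) ω) (μ n) :=
          hind_int.const_mul _
        calc (1 - e) * F
            = ∫ ω, (1-e) * Set.indicator ((X n) ⁻¹' Set.Iic t) (1 : Ω n → ℝ) ω ∂(μ n) := by
              rw [integral_const_mul, integral_indicator_one (hAmeas n), measureReal_def]
          _ ≤ ∫ ω, f n (X n ω - (t + δ)) ∂(μ n) := integral_mono h1 (hint n _) hptwise
      linarith [abs_sub_lt_iff.1 hCn]
    -- combine
    have hF0 := (hF01 n).1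
    have hF1 := (hF01 n).2
    have h1 : F ≥ p t - 3 * e := by
      have := abs_sub_lt_iff.1 hpt2
      linarith [this.2]
    have h2 : F ≤ p t + 3 * e := by
      have h3 : F ≤ (1 - e) * F + e := by nlinarith
      have := abs_sub_lt_iff.1 hpt1
      linarith [this.1]
    constructor <;> linarith
  obtain ⟨N, hN⟩ := eventually_atTop.1 hall
  exact ⟨N, hN⟩


lemma open_le_liminf {m : ℕ → Measure ℝ} [∀ n, IsProbabilityMeasure (m n)]
    {ν : Measure ℝ} [IsProbabilityMeasure ν]
    (hIoc : ∀ a b : ℝ, Tendsto (fun n => m n (Set.Ioc a b)) atTop (nhds (ν (Set.Ioc a b))))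
    (G : Set ℝ) (hG : IsOpen G) : ν G ≤ atTop.liminf (fun n => m n G) := by
  classical
  rcases Set.eq_empty_or_nonempty Gᶜ with hGc | hGc
  · have hGuniv : G = Set.univ := by
      rw [← Set.compl_empty_iff]; exact hGc
    subst hGuniv
    have : (fun n => m n (Set.univ : Set ℝ)) = fun _ => 1 := by
      funext n; simp
    rw [this, liminf_const]
    simp [measure_univ]
  apply le_of_forall_lt
  intro r hr
  obtain ⟨K, hKG, hKcomp, hrK⟩ := hG.exists_lt_isCompact hr
  rcases K.eq_empty_or_nonempty with hKe | hKne
  · subst hKe; simp at hrK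
  -- minimum distance to the complement
  have hcont : Continuous (fun x : ℝ => Metric.infDist x Gᶜ) :=
    Metric.continuous_infDist_pt _
  obtain ⟨x0, hx0K, hmin⟩ := hKcomp.exists_isMinOn hKne hcont.continuousOn
  set δ0 : ℝ := Metric.infDist x0 Gᶜ with hδ0_def
  have hδ0pos : 0 < δ0 := by
    rw [hδ0_def, ← hG.isClosed_compl.notMem_iff_infDist_pos hGc]
    intro hx
    exact hx (hKG hx0K)
  set h : ℝ := δ0 / 2 with hh_def
  have hhpos : 0 < h := by positivity
  -- K is bounded
  obtain ⟨M, hM⟩ := hKcomp.isBounded.subset_closedBall 0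
  rw [Real.closedBall_eq_Icc, zero_sub, zero_add] at hM
  -- the grid
  set cell : ℤ → Set ℝ := fun k => Set.Ioc ((k - 1 : ℤ) * h) (k * h) with hcell_def
  set S : Finset ℤ := (Finset.Icc ⌈(-M)/h⌉ ⌈M/h⌉).filter
      (fun k => (cell k ∩ K).Nonempty) with hS_def
  have hcover : K ⊆ ⋃ k ∈ S, cell k := by
    intro y hy
    have hyM := hM hy
    simp only [Set.mem_Icc] at hyM
    refine Set.mem_iUnion₂.2 ⟨⌈y/h⌉, ?_, ?_⟩
    · rw [hS_def, Finset.mem_filter]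
      constructor
      · rw [Finset.mem_Icc]
        exact ⟨Int.ceil_le_ceil ((div_le_div_iff_of_pos_right hhpos).2 hyM.1),
          Int.ceil_le_ceil ((div_le_div_iff_of_pos_right hhpos).2 hyM.2)⟩
      · refine ⟨y, ⟨?_, hy⟩⟩
        rw [hcell_def, Set.mem_Ioc]
        have hy' : y / h * h = y := div_mul_cancel₀ y hhpos.ne'
        have hc1 := Int.ceil_lt_add_one (y / h)
        have hc2 := Int.le_ceil (y / h)
        constructor
        · push_cast
          nlinarith
        · nlinarith
    · rw [hcell_def, Set.mem_Ioc]
      have hy' : y / h * h = y := div_mul_cancel₀ y hhpos.ne'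
      have hc1 := Int.ceil_lt_add_one (y / h)
      have hc2 := Int.le_ceil (y / h)
      constructor
      · push_cast
        nlinarith
      · nlinarith
  have hcellG : ∀ k ∈ S, cell k ⊆ G := by
    intro k hk z hz
    rw [hS_def, Finset.mem_filter] at hk
    obtain ⟨y, hycell, hyK⟩ := hk.2
    by_contra hzG
    have hzGc : z ∈ Gᶜ := hzG
    have h1 : Metric.infDist y Gᶜ ≤ dist y z := Metric.infDist_le_dist_of_mem hzGc
    have h2 : δ0 ≤ Metric.infDist y Gᶜ := hmin hyK
    have h3 : dist y z ≤ h := by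
      rw [Real.dist_eq, abs_le]
      rw [hcell_def] at hycell hz
      obtain ⟨hy1, hy2⟩ := hycell
      obtain ⟨hz1, hz2⟩ := hz
      push_cast at hy1 hy2 hz1 hz2
      constructor <;> nlinarith
    rw [hh_def] at h3
    linarith
  have hdisj : (S : Set ℤ).PairwiseDisjoint cell := by
    intro k _ k' _ hkk'
    rw [hcell_def]
    simp only [Function.onFun]
    rw [Set.Ioc_disjoint_Ioc]
    rcases hkk'.lt_or_gt with hlt | hlt
    · refine le_trans inf_le_left (le_trans ?_ le_sup_right)
      have : (k : ℝ) + 1 ≤ (k' : ℝ) := by exact_mod_cast hlt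
      push_cast
      nlinarith
    · refine le_trans inf_le_right (le_trans ?_ le_sup_left)
      have : (k' : ℝ) + 1 ≤ (k : ℝ) := by exact_mod_cast hlt
      push_cast
      nlinarith
  have hcell_meas : ∀ k : ℤ, MeasurableSet (cell k) := fun k => measurableSet_Ioc
  -- sum convergence
  have hsum_tendsto : Tendsto (fun n => ∑ k ∈ S, m n (cell k)) atTop
      (nhds (∑ k ∈ S, ν (cell k))) := by
    exact tendsto_finset_sum S (fun k _ => hIoc _ _)
  have hsum_le : ∀ n, ∑ k ∈ S, m n (cell k) ≤ m n G := by
    intro n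
    rw [← measure_biUnion_finset hdisj (fun k _ => hcell_meas k)]
    exact measure_mono (Set.iUnion₂_subset hcellG)
  have hνsum : ν K ≤ ∑ k ∈ S, ν (cell k) := by
    calc ν K ≤ ν (⋃ k ∈ S, cell k) := measure_mono hcover
      _ = ∑ k ∈ S, ν (cell k) := measure_biUnion_finset hdisj (fun k _ => hcell_meas k)
  calc r < ν K := hrK
    _ ≤ ∑ k ∈ S, ν (cell k) := hνsum
    _ = atTop.liminf (fun n => ∑ k ∈ S, m n (cell k)) := (hsum_tendsto.liminf_eq).symm
    _ ≤ atTop.liminf (fun n => m n G) := liminf_le_liminf (Eventually.of_forall hsum_le)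

open Filter MeasureTheory

theorem stmt_3
    {Ω : ℕ → Type*} [∀ n, MeasurableSpace (Ω n)]
    (μ : ∀ n, Measure (Ω n)) [∀ n, IsProbabilityMeasure (μ n)]
    (X : ∀ n, Ω n → ℝ) (hXm : ∀ n, Measurable (X n))
    (f : ℕ → ℝ → ℝ)
    (hf01 : ∀ n x, f n x ∈ Set.Icc (0:ℝ) 1)
    (hanti : ∀ n, StrictAnti (f n))
    (hlim1 : ∀ n, Tendsto (f n) atBot (nhds 1))
    (hlim0 : ∀ n, Tendsto (f n) atTop (nhds 0))
    (hfU : ∀ δ : ℝ, 0 < δ →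
      TendstoUniformlyOn f (fun y => if y < 0 then 1 else 0) atTop ((Set.Icc (-δ) δ)ᶜ))
    (p : ℝ → ℝ) (hp : Continuous p) (hpmono : Monotone p)
    (hp0 : Tendsto p atBot (nhds 0)) (hp1 : Tendsto p atTop (nhds 1))
    (hconv : ∀ x : ℝ,
      Tendsto (fun n => ∫ ω, f n (X n ω - x) ∂(μ n)) atTop (nhds (p x))) :
    ∃ ν : Measure ℝ, IsProbabilityMeasure ν ∧
      (∀ x : ℝ, (ν (Set.Iio x)).toReal = p x) ∧
      (∀ g : BoundedContinuousFunction ℝ ℝ,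
        Tendsto (fun n => ∫ ω, g (X n ω) ∂(μ n)) atTop (nhds (∫ y, g y ∂ν))) := by
  classical
  set St : StieltjesFunction ℝ := ⟨p, hpmono, fun x => (hp.continuousAt).continuousWithinAt⟩
    with hSt
  have hStp : (St : ℝ → ℝ) = p := rfl
  set ν : Measure ℝ := St.measure with hν
  have hp_nonneg : ∀ x, 0 ≤ p x := by
    intro x
    apply le_of_tendsto hp0
    filter_upwards [eventually_le_atBot x] with y hy using hpmono hy
  have hνIic : ∀ x, ν (Set.Iic x) = ENNReal.ofReal (p x) := by
    intro x
    rw [hν, St.measure_Iic (by rw [hStp]; exact hp0) x, hStp, sub_zero]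
  haveI hprob : IsProbabilityMeasure ν := by
    constructor
    rw [hν, St.measure_univ (l := 0) (u := 1) (by rw [hStp]; exact hp0)
      (by rw [hStp]; exact hp1)]
    simp
  have hsingleton : ∀ x, ν {x} = 0 := by
    intro x
    rw [hν, St.measure_singleton]
    have hll : Function.leftLim (St : ℝ → ℝ) x = p x := by
      rw [hStp]
      exact leftLim_eq_of_tendsto
        ((hp.tendsto x).mono_left nhdsWithin_le_nhds)
    rw [hll, hStp]
    simp
  have hνIio : ∀ x, ν (Set.Iio x) = ENNReal.ofReal (p x) := by
    intro x
    rw [← hνIic x, ← Set.Iio_union_right,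
      measure_union (by simp) (measurableSet_singleton x), hsingleton, add_zero]
  refine ⟨ν, hprob, ?_, ?_⟩
  · intro x; rw [hνIio x, ENNReal.toReal_ofReal (hp_nonneg x)]
  set m : ℕ → Measure ℝ := fun n => (μ n).map (X n) with hm
  haveI : ∀ n, IsProbabilityMeasure (m n) := fun n =>
    Measure.isProbabilityMeasure_map (hXm n).aemeasurable
  have hcdf : ∀ t, Tendsto (fun n => (m n (Set.Iic t)).toReal) atTop (nhds (p t)) := by
    intro t
    have h0 := cdf_tendsto μ X hXm f hf01 hanti hfU p hp hpmono hconv t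
    refine h0.congr fun n => ?_
    rw [hm, Measure.map_apply (hXm n) measurableSet_Iic]
  have hIoc : ∀ a b : ℝ, Tendsto (fun n => m n (Set.Ioc a b)) atTop
      (nhds (ν (Set.Ioc a b))) := by
    intro a b
    rcases le_or_gt b a with hba | hab
    · rw [Set.Ioc_eq_empty (not_lt.2 hba)]
      simp only [measure_empty]
      exact tendsto_const_nhds
    · have heq : ∀ n, (m n (Set.Iic b)).toReal - (m n (Set.Iic a)).toReal
          = (m n (Set.Ioc a b)).toReal := by
        intro n
        rw [← Set.Iic_sdiff_Iic,
          measure_diff (Set.Iic_subset_Iic.2 hab.le) measurableSet_Iic.nullMeasurableSet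
            (measure_ne_top _ _),
          ENNReal.toReal_sub_of_le (measure_mono (Set.Iic_subset_Iic.2 hab.le))
            (measure_ne_top _ _)]
      have hν_eq : (ν (Set.Ioc a b)).toReal = p b - p a := by
        rw [hν, St.measure_Ioc, hStp, ENNReal.toReal_ofReal (by linarith [hpmono hab.le])]
      have hreal : Tendsto (fun n => (m n (Set.Ioc a b)).toReal) atTop
          (nhds ((ν (Set.Ioc a b)).toReal)) := by
        rw [hν_eq]
        exact Tendsto.congr heq ((hcdf b).sub (hcdf a))
      exact (ENNReal.tendsto_toReal_iff (fun n => measure_ne_top _ _)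
        (measure_ne_top _ _)).1 hreal
  set Pν : ProbabilityMeasure ℝ := ⟨ν, hprob⟩ with hPν
  set Pm : ℕ → ProbabilityMeasure ℝ := fun n => ⟨m n, inferInstance⟩ with hPm
  have hopen : ∀ G : Set ℝ, IsOpen G → Pν G ≤ atTop.liminf (fun i => Pm i G) := by
    intro G hG
    have hEN : ν G ≤ atTop.liminf (fun n => m n G) := open_le_liminf hIoc G hG
    have aux : (ENNReal.ofNNReal (atTop.liminf (fun i => Pm i G))) =
        atTop.liminf (fun i => ((Pm i G : ℝ≥0) : ℝ≥0∞)) := by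
      refine Monotone.map_liminf_of_continuousAt (F := atTop) ENNReal.coe_mono
        (fun i => Pm i G) ?_ ?_ ?_
      · exact ENNReal.continuous_coe.continuousAt
      · exact IsBoundedUnder.isCoboundedUnder_ge ⟨1, by simp⟩
      · exact ⟨0, by simp⟩
    rw [← ENNReal.coe_le_coe, aux]
    simp only [ProbabilityMeasure.ennreal_coeFn_eq_coeFn_toMeasure]
    exact hEN
  have htend := tendsto_of_forall_isOpen_le_liminf hopen
  intro g
  have hkey := ProbabilityMeasure.tendsto_iff_forall_integral_tendsto.1 htend g
  have hkey2 : Tendsto (fun i => ∫ y, g y ∂(m i)) atTop (nhds (∫ y, g y ∂ν)) := hkey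
  refine hkey2.congr fun n => ?_
  rw [hm]
  exact integral_map (hXm n).aemeasurable g.continuous.measurable.aestronglyMeasurable
end

section
/- Let δ ∈ (0,1), r ∈ (0,1), a ∈ (0, 1−δ]. The function S_{a,r}(z) = ∑_{j=0}^∞ [log(1 + a r^j e^z) − log(1 + a r^j e^{−z})] is an odd function near 0, its power series expansion at 0 has the form S_{a,r}(z) = c_1 z + c_3 z^3 + c_5 z^5 + ⋯ (all even coefficients vanish), where c_{2l+1} = (2/((2l+1)!)) ∑_{k=1}^∞ k^{2l} (−1)^{k+1} a^k / (1 − r^k). Moreover, for every l ≥ 1 one has c_{2l+1} ≤ 1/((1−r) δ^{2l+1}). -/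
lemma aux_sinh_series (w : ℂ) :
    HasSum (fun l : ℕ => 2 * w ^ (2 * l + 1) / ((2 * l + 1).factorial : ℂ))
      (Complex.exp w - Complex.exp (-w)) := by
  have h1 : HasSum (fun m : ℕ => w ^ m / (m.factorial : ℂ)) (Complex.exp w) := by
    rw [Complex.exp_eq_exp_ℂ]; exact NormedSpace.expSeries_div_hasSum_exp w
  have h2 : HasSum (fun m : ℕ => (-w) ^ m / (m.factorial : ℂ)) (Complex.exp (-w)) := by
    rw [Complex.exp_eq_exp_ℂ]; exact NormedSpace.expSeries_div_hasSum_exp (-w)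
  have h3 := h1.sub h2
  have hinj : Function.Injective (fun l : ℕ => 2 * l + 1) := by
    intro a b h; simpa using h
  have h0 : ∀ m : ℕ, m ∉ Set.range (fun l : ℕ => 2 * l + 1) →
      w ^ m / (m.factorial : ℂ) - (-w) ^ m / (m.factorial : ℂ) = 0 := by
    intro m hm
    have hev : Even m := by
      rcases Nat.even_or_odd m with h | h
      · exact h
      · obtain ⟨l, hl⟩ := h
        exact absurd ⟨l, by simpa using hl.symm⟩ hm
    rw [hev.neg_pow, sub_self]
  have h4 := (hinj.hasSum_iff h0).2 h3
  refine h4.congr_fun fun l => ?_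
  have hodd : Odd (2 * l + 1) := ⟨l, by ring⟩
  simp only [Function.comp, hodd.neg_pow]
  ring

lemma aux_sinh_series_real (w : ℝ) :
    HasSum (fun l : ℕ => 2 * w ^ (2 * l + 1) / ((2 * l + 1).factorial : ℝ))
      (Real.exp w - Real.exp (-w)) := by
  have h1 : HasSum (fun m : ℕ => w ^ m / (m.factorial : ℝ)) (Real.exp w) := by
    rw [Real.exp_eq_exp_ℝ]; exact NormedSpace.expSeries_div_hasSum_exp w
  have h2 : HasSum (fun m : ℕ => (-w) ^ m / (m.factorial : ℝ)) (Real.exp (-w)) := by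
    rw [Real.exp_eq_exp_ℝ]; exact NormedSpace.expSeries_div_hasSum_exp (-w)
  have h3 := h1.sub h2
  have hinj : Function.Injective (fun l : ℕ => 2 * l + 1) := by
    intro a b h; simpa using h
  have h0 : ∀ m : ℕ, m ∉ Set.range (fun l : ℕ => 2 * l + 1) →
      w ^ m / (m.factorial : ℝ) - (-w) ^ m / (m.factorial : ℝ) = 0 := by
    intro m hm
    have hev : Even m := by
      rcases Nat.even_or_odd m with h | h
      · exact h
      · obtain ⟨l, hl⟩ := h
        exact absurd ⟨l, by simpa using hl.symm⟩ hm
    rw [hev.neg_pow, sub_self]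
  have h4 := (hinj.hasSum_iff h0).2 h3
  refine h4.congr_fun fun l => ?_
  have hodd : Odd (2 * l + 1) := ⟨l, by ring⟩
  simp only [Function.comp, hodd.neg_pow]
  ring

section
variable {δ r a : ℝ} (hδ0 : 0 < δ) (hδ1 : δ < 1) (hr0 : 0 < r) (hr1 : r < 1)
  (ha0 : 0 < a) (ha1 : a ≤ 1 - δ)

include hδ0 hδ1 hr0 hr1 ha0 ha1

lemma aux_abs_le (l k : ℕ) :
    |((k + 1 : ℝ)) ^ (2 * l) * (-1 : ℝ) ^ k * a ^ (k + 1) / (1 - r ^ (k + 1))|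
      ≤ (((2 * l).factorial : ℝ) / (1 - r) * a) * (((k + 2 * l).choose (2 * l) : ℝ) * a ^ k) := by
  have ha1' : a < 1 := by linarith
  have h1 : (0:ℝ) < 1 - r := by linarith
  have h2 : r ^ (k+1) ≤ r := pow_le_of_le_one hr0.le hr1.le (Nat.succ_ne_zero k)
  have h3 : (0:ℝ) < 1 - r ^ (k+1) := by linarith
  have habs : |((k + 1 : ℝ)) ^ (2 * l) * (-1 : ℝ) ^ k * a ^ (k + 1) / (1 - r ^ (k + 1))|
      = ((k + 1 : ℝ)) ^ (2 * l) * a ^ (k + 1) / (1 - r ^ (k + 1))  := by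
    rw [abs_div, abs_mul, abs_mul, abs_pow, abs_pow, abs_pow, abs_neg, abs_one, one_pow, mul_one,
      abs_of_nonneg (by positivity : (0:ℝ) ≤ (k:ℝ)+1), abs_of_pos ha0, abs_of_pos h3]
  rw [habs]
  have hpc : ((k + 1 : ℝ)) ^ (2 * l) ≤ ((2 * l).factorial : ℝ) * ((k + 2 * l).choose (2 * l)) := by
    have h := Nat.pow_le_choose (α := ℝ) (2 * l) (k + 2 * l)
    rw [div_le_iff₀ (by positivity)] at h
    have hk : k + 2 * l + 1 - 2 * l = k + 1 := by omega
    rw [hk] at h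
    push_cast at h
    exact h.trans_eq (mul_comm _ _)
  calc ((k + 1 : ℝ)) ^ (2 * l) * a ^ (k + 1) / (1 - r ^ (k + 1))
      ≤ ((k + 1 : ℝ)) ^ (2 * l) * a ^ (k + 1) / (1 - r) := by gcongr
    _ ≤ (((2 * l).factorial : ℝ) * ((k + 2 * l).choose (2 * l))) * a ^ (k + 1) / (1 - r) := by
        gcongr
    _ = (((2 * l).factorial : ℝ) / (1 - r) * a) * (((k + 2 * l).choose (2 * l) : ℝ) * a ^ k) := by
        rw [pow_succ]; ring

lemma aux_B_hasSum (l : ℕ) :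
    HasSum (fun k : ℕ => (((2 * l).factorial : ℝ) / (1 - r) * a) *
        (((k + 2 * l).choose (2 * l) : ℝ) * a ^ k))
      ((((2 * l).factorial : ℝ) / (1 - r) * a) * (1 / (1 - a) ^ (2 * l + 1))) := by
  have ha1' : a < 1 := by linarith
  have h : ‖a‖ < 1 := by rw [Real.norm_eq_abs, abs_of_pos ha0]; exact ha1'
  exact (hasSum_choose_mul_geometric_of_norm_lt_one (2 * l) h).mul_left _

lemma aux_f_summable (l : ℕ) :
    Summable (fun k : ℕ =>
      ((k + 1 : ℝ)) ^ (2 * l) * (-1 : ℝ) ^ k * a ^ (k + 1) / (1 - r ^ (k + 1))) := by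
  refine Summable.of_norm_bounded (aux_B_hasSum hδ0 hδ1 hr0 hr1 ha0 ha1 l).summable ?_
  intro k
  rw [Real.norm_eq_abs]
  exact aux_abs_le hδ0 hδ1 hr0 hr1 ha0 ha1 l k

lemma aux_coeff_bound (l : ℕ) (hl : 1 ≤ l) :
    2 / ((2 * l + 1).factorial : ℝ) *
      ∑' k : ℕ, ((k + 1 : ℝ)) ^ (2 * l) * (-1 : ℝ) ^ k * a ^ (k + 1) / (1 - r ^ (k + 1))
    ≤ 1 / ((1 - r) * δ ^ (2 * l + 1)) := by
  have ha1' : a < 1 := by linarith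
  have h1 : (0:ℝ) < 1 - r := by linarith
  have h1a : (0:ℝ) < 1 - a := by linarith
  have hK : (0:ℝ) < ((2 * l).factorial : ℝ) := by positivity
  have hF : (0:ℝ) < ((2 * l + 1).factorial : ℝ) := by positivity
  have step1 : ∑' k : ℕ, ((k + 1 : ℝ)) ^ (2 * l) * (-1 : ℝ) ^ k * a ^ (k + 1) / (1 - r ^ (k + 1))
      ≤ (((2 * l).factorial : ℝ) / (1 - r) * a) * (1 / (1 - a) ^ (2 * l + 1)) := by
    rw [← (aux_B_hasSum hδ0 hδ1 hr0 hr1 ha0 ha1 l).tsum_eq]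
    refine Summable.tsum_le_tsum (fun k => ?_) (aux_f_summable hδ0 hδ1 hr0 hr1 ha0 ha1 l)
      (aux_B_hasSum hδ0 hδ1 hr0 hr1 ha0 ha1 l).summable
    exact (le_abs_self _).trans (aux_abs_le hδ0 hδ1 hr0 hr1 ha0 ha1 l k)
  have hδa : δ ≤ 1 - a := by linarith
  have hpow : δ ^ (2 * l + 1) ≤ (1 - a) ^ (2 * l + 1) := pow_le_pow_left₀ hδ0.le hδa _
  have hfs : ((2 * l + 1).factorial : ℝ) = ((2 * l + 1) : ℝ) * ((2 * l).factorial : ℝ) := by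
    rw [Nat.factorial_succ]; push_cast; ring
  calc 2 / ((2 * l + 1).factorial : ℝ) *
      ∑' k : ℕ, ((k + 1 : ℝ)) ^ (2 * l) * (-1 : ℝ) ^ k * a ^ (k + 1) / (1 - r ^ (k + 1))
      ≤ 2 / ((2 * l + 1).factorial : ℝ) *
        ((((2 * l).factorial : ℝ) / (1 - r) * a) * (1 / (1 - a) ^ (2 * l + 1))) :=
        mul_le_mul_of_nonneg_left step1 (by positivity)
    _ = (2 * ((2 * l).factorial : ℝ) / ((2 * l + 1).factorial : ℝ)) *
        (a * ((1 - r) * (1 - a) ^ (2 * l + 1))⁻¹) := by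
        rw [mul_inv, one_div, div_eq_mul_inv, div_eq_mul_inv, div_eq_mul_inv]; ring
    _ ≤ 1 * (1 * ((1 - r) * δ ^ (2 * l + 1))⁻¹) := by
        refine mul_le_mul ?_ (mul_le_mul ha1'.le ?_ (by positivity) (by norm_num)) (by positivity)
          (by norm_num)
        · rw [div_le_one hF, hfs]
          have hl' : (1:ℝ) ≤ (l:ℝ) := by exact_mod_cast hl
          nlinarith [hK]
        · exact inv_anti₀ (by positivity) (by gcongr)
    _ = 1 / ((1 - r) * δ ^ (2 * l + 1)) := by rw [one_mul, one_mul, one_div]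
end

lemma aux_exp_norm_le (w : ℂ) : ‖Complex.exp w‖ ≤ Real.exp (‖w‖) := by
  rw [Complex.norm_exp]
  exact Real.exp_le_exp.2 ((le_abs_self _).trans (Complex.abs_re_le_norm w))

lemma aux_exp_norm_pow (m : ℕ) (z : ℂ) :
    ‖Complex.exp ((m : ℂ) * z)‖ ≤ Real.exp (‖z‖) ^ m := by
  have h := aux_exp_norm_le ((m : ℂ) * z)
  rwa [norm_mul, Complex.norm_natCast, Real.exp_nat_mul] at h

lemma aux_exp_norm_pow_neg (m : ℕ) (z : ℂ) :
    ‖Complex.exp (-((m : ℂ) * z))‖ ≤ Real.exp (‖z‖) ^ m := by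
  have h := aux_exp_norm_pow m (-z)
  rwa [mul_neg, norm_neg] at h

theorem stmt_6 (δ r a : ℝ) (hδ : δ ∈ Set.Ioo (0:ℝ) 1) (hr : r ∈ Set.Ioo (0:ℝ) 1)
    (ha : a ∈ Set.Ioc (0:ℝ) (1 - δ))
    (S : ℂ → ℂ)
    (hS : ∀ z : ℂ, S z = ∑' j : ℕ,
      (Complex.log (1 + (a : ℂ) * (r : ℂ) ^ j * Complex.exp z)
        - Complex.log (1 + (a : ℂ) * (r : ℂ) ^ j * Complex.exp (-z))))
    (c : ℕ → ℝ)
    (hc : ∀ l : ℕ, c l = 2 / (Nat.factorial (2 * l + 1) : ℝ) *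
      ∑' k : ℕ, ((k + 1 : ℝ)) ^ (2 * l) * (-1 : ℝ) ^ k * a ^ (k + 1) / (1 - r ^ (k + 1))) :
    (∃ ε > 0, ∀ z : ℂ, ‖z‖ < ε →
      S (-z) = - S z ∧ S z = ∑' l : ℕ, (c l : ℂ) * z ^ (2 * l + 1)) ∧
    (∀ l : ℕ, 1 ≤ l → c l ≤ 1 / ((1 - r) * δ ^ (2 * l + 1))) := by
  obtain ⟨hδ0, hδ1⟩ := hδ
  obtain ⟨hr0, hr1⟩ := hr
  obtain ⟨ha0, ha1⟩ := ha
  have ha1' : a < 1 := by linarith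
  have h1r : (0:ℝ) < 1 - r := by linarith
  constructor
  · -- the analytic part
    have hρ0 : (0:ℝ) < (1 + a) / 2 := by linarith
    have haρ : a < (1 + a) / 2 := by linarith
    have hρ1 : (1 + a) / 2 < 1 := by linarith
    refine ⟨Real.log ((1 + a) / 2 / a),
      Real.log_pos (by rw [one_lt_div ha0]; linarith), fun z hz => ?_⟩
    have hodd : S (-z) = -S z := by
      rw [hS z, hS (-z), ← tsum_neg]
      exact tsum_congr fun j => by rw [neg_neg]; ring
    refine ⟨hodd, ?_⟩
    set t : ℝ := ‖z‖ with htdef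
    have ht0 : 0 ≤ t := norm_nonneg z
    set q : ℝ := a * Real.exp t with hqdef
    have hq0 : 0 < q := by positivity
    have hqρ : q < (1 + a) / 2 := by
      have hlt : Real.exp t < (1 + a) / 2 / a := by
        rw [← Real.exp_log (show (0:ℝ) < (1 + a) / 2 / a by positivity)]
        exact Real.exp_lt_exp.2 hz
      calc q = a * Real.exp t := rfl
        _ < a * ((1 + a) / 2 / a) := mul_lt_mul_of_pos_left hlt ha0
        _ = (1 + a) / 2 := by field_simp
    have hq1 : q < 1 := hqρ.trans hρ1
    -- norm of the log argument
    have hwn : ∀ (j : ℕ) (e : ℂ), ‖e‖ ≤ Real.exp t → ‖(a:ℂ) * (r:ℂ) ^ j * e‖ ≤ q * r ^ j := by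
      intro j e he
      have h1 : ‖(a:ℂ) * (r:ℂ) ^ j‖ = a * r ^ j := by
        rw [norm_mul, norm_pow, Complex.norm_real, Complex.norm_real, Real.norm_eq_abs,
          Real.norm_eq_abs, abs_of_pos ha0, abs_of_pos hr0]
      rw [norm_mul, h1]
      calc a * r ^ j * ‖e‖ ≤ a * r ^ j * Real.exp t := by
            apply mul_le_mul_of_nonneg_left he (by positivity)
        _ = q * r ^ j := by rw [hqdef]; ring
    have hqr1 : ∀ j : ℕ, q * r ^ j < 1 := by
      intro j
      calc q * r ^ j ≤ q * 1 := by
            apply mul_le_mul_of_nonneg_left _ hq0.le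
            exact pow_le_one₀ hr0.le hr1.le
        _ < 1 := by rw [mul_one]; exact hq1
    have hez : ‖Complex.exp z‖ ≤ Real.exp t := by
      simpa using aux_exp_norm_pow 1 z
    have henz : ‖Complex.exp (-z)‖ ≤ Real.exp t := by
      simpa using aux_exp_norm_pow_neg 1 z
    -- the double series over (j, n)
    set F : ℕ → ℕ → ℂ := fun j n => (-1) ^ (n + 1) * ((a:ℂ) * (r:ℂ) ^ j) ^ n / n *
      (Complex.exp ((n : ℂ) * z) - Complex.exp (-((n : ℂ) * z))) with hFdef
    have hA : ∀ j : ℕ, HasSum (F j)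
        (Complex.log (1 + (a : ℂ) * (r : ℂ) ^ j * Complex.exp z)
          - Complex.log (1 + (a : ℂ) * (r : ℂ) ^ j * Complex.exp (-z))) := by
      intro j
      have hpl := Complex.hasSum_taylorSeries_log
        (z := (a:ℂ) * (r:ℂ) ^ j * Complex.exp z) ((hwn j _ hez).trans_lt (hqr1 j))
      have hmn := Complex.hasSum_taylorSeries_log
        (z := (a:ℂ) * (r:ℂ) ^ j * Complex.exp (-z)) ((hwn j _ henz).trans_lt (hqr1 j))
      refine (hpl.sub hmn).congr_fun fun n => ?_
      rw [hFdef]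
      simp only []
      rw [mul_pow ((a:ℂ) * (r:ℂ) ^ j) (Complex.exp z) n,
        mul_pow ((a:ℂ) * (r:ℂ) ^ j) (Complex.exp (-z)) n,
        ← Complex.exp_nat_mul, ← Complex.exp_nat_mul, mul_neg]
      ring
    -- summability over the product
    have hFnorm : ∀ p : ℕ × ℕ, ‖F p.1 p.2‖ ≤ 2 * r ^ p.1 * q ^ p.2 := by
      rintro ⟨j, n⟩
      match n with
      | 0 =>
        simp only [hFdef, Nat.cast_zero, zero_mul, neg_zero, sub_self, mul_zero, norm_zero]
        positivity
      | (n + 1) =>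
        have hnw : ‖(a:ℂ) * (r:ℂ) ^ j‖ = a * r ^ j := by
          rw [norm_mul, norm_pow, Complex.norm_real, Complex.norm_real, Real.norm_eq_abs,
            Real.norm_eq_abs, abs_of_pos ha0, abs_of_pos hr0]
        have harj : (0:ℝ) ≤ a * r ^ j := by positivity
        have heq : ‖F j (n+1)‖ = (a * r ^ j) ^ (n+1) / ((n:ℝ)+1) *
            ‖Complex.exp (((n+1:ℕ) : ℂ) * z) - Complex.exp (-(((n+1:ℕ) : ℂ) * z))‖ := by
          rw [hFdef]
          simp only []
          rw [norm_mul, norm_div, norm_mul, norm_pow, norm_neg, norm_one, one_pow, one_mul,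
            norm_pow, hnw, Complex.norm_natCast]
          push_cast
          ring
        rw [heq]
        have hD : ‖Complex.exp (((n+1:ℕ) : ℂ) * z) - Complex.exp (-(((n+1:ℕ) : ℂ) * z))‖
            ≤ 2 * Real.exp t ^ (n+1) := by
          refine (norm_sub_le _ _).trans ?_
          have e1 := aux_exp_norm_pow (n+1) z
          have e2 := aux_exp_norm_pow_neg (n+1) z
          rw [htdef]
          linarith
        calc (a * r ^ j) ^ (n+1) / ((n:ℝ)+1) *
            ‖Complex.exp (((n+1:ℕ) : ℂ) * z) - Complex.exp (-(((n+1:ℕ) : ℂ) * z))‖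
            ≤ (a * r ^ j) ^ (n+1) * (2 * Real.exp t ^ (n+1)) := by
              refine mul_le_mul ?_ hD (norm_nonneg _) (by positivity)
              exact div_le_self (by positivity) (by push_cast; linarith)
          _ = 2 * (q * r ^ j) ^ (n+1) := by rw [hqdef]; ring
          _ = 2 * (q ^ (n+1) * (r ^ j) ^ (n+1)) := by rw [mul_pow]
          _ ≤ 2 * (q ^ (n+1) * r ^ j) := by
              have : (r ^ j) ^ (n+1) ≤ r ^ j := by
                rw [← pow_mul]
                exact pow_le_pow_of_le_one hr0.le hr1.le (Nat.le_mul_of_pos_right j n.succ_pos)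
              apply mul_le_mul_of_nonneg_left _ (by norm_num)
              exact mul_le_mul_of_nonneg_left this (by positivity)
          _ = 2 * r ^ j * q ^ (n+1) := by ring
    have hFsum : Summable (Function.uncurry F) := by
      refine Summable.of_norm_bounded (g := fun p : ℕ × ℕ => 2 * r ^ p.1 * q ^ p.2) ?_ hFnorm
      have h1 : Summable (fun j : ℕ => 2 * r ^ j) :=
        (summable_geometric_of_lt_one hr0.le hr1).mul_left 2
      have h2 : Summable (fun n : ℕ => q ^ n) := summable_geometric_of_lt_one hq0.le hq1
      exact h1.mul_of_nonneg h2 (fun j => by positivity) (fun n => by positivity)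
    -- per-n geometric summation over j
    set G : ℕ → ℂ := fun n => (-1) ^ (n + 1) * (a:ℂ) ^ n / n *
      (Complex.exp ((n : ℂ) * z) - Complex.exp (-((n : ℂ) * z))) * (1 - (r:ℂ) ^ n)⁻¹ with hGdef
    have hC : ∀ n : ℕ, HasSum (fun j => F j n) (G n) := by
      intro n
      match n with
      | 0 =>
        have hF0 : ∀ j : ℕ, F j 0 = 0 := by
          intro j
          simp [hFdef]
        have hG0 : G 0 = 0 := by simp [hGdef]
        rw [hG0]
        exact (hasSum_zero).congr_fun fun j => hF0 j
      | (m + 1) =>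
        have hrn : ‖(r:ℂ) ^ (m+1)‖ < 1 := by
          rw [norm_pow, Complex.norm_real, Real.norm_eq_abs, abs_of_pos hr0]
          exact pow_lt_one₀ hr0.le hr1 (Nat.succ_ne_zero m)
        have hgeo := hasSum_geometric_of_norm_lt_one hrn
        have h2 := hgeo.mul_left ((-1) ^ (m+1+1) * (a:ℂ) ^ (m+1) / ((m+1:ℕ) : ℂ) *
          (Complex.exp (((m+1:ℕ) : ℂ) * z) - Complex.exp (-(((m+1:ℕ) : ℂ) * z))))
        have hGm : G (m+1) = (-1) ^ (m+1+1) * (a:ℂ) ^ (m+1) / ((m+1:ℕ) : ℂ) *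
            (Complex.exp (((m+1:ℕ) : ℂ) * z) - Complex.exp (-(((m+1:ℕ) : ℂ) * z))) *
            (1 - (r:ℂ) ^ (m+1))⁻¹ := by
          rw [hGdef]
        rw [hGm]
        refine h2.congr_fun fun j => ?_
        rw [hFdef]
        simp only []
        rw [mul_pow ((a:ℂ)) ((r:ℂ) ^ j) (m+1), pow_right_comm]
        ring
    -- assemble first swap
    have SA : S z = ∑' (j : ℕ), ∑' (n : ℕ), F j n := by
      rw [hS z]
      exact tsum_congr fun j => ((hA j).tsum_eq).symm
    have SB : ∑' (j : ℕ), ∑' (n : ℕ), F j n = ∑' (n : ℕ), ∑' (j : ℕ), F j n :=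
      (Summable.tsum_comm hFsum).symm
    have SC : ∑' (n : ℕ), ∑' (j : ℕ), F j n = ∑' (n : ℕ), G n :=
      tsum_congr fun n => (hC n).tsum_eq
    have hGinj : Function.Injective (fun k : ℕ => k + 1) := fun x y h => by simpa using h
    have SD : ∑' (n : ℕ), G n = ∑' (k : ℕ), G (k + 1) := by
      refine (Function.Injective.tsum_eq hGinj ?_).symm
      intro x hx
      rcases x with _ | x
      · exact absurd (by simp [hGdef] : G 0 = 0) (Function.mem_support.mp hx)
      · exact ⟨x, rfl⟩
    -- the (k, l) double series
    set T : ℕ → ℕ → ℂ := fun k l => (-1) ^ (k+1+1) * (a:ℂ) ^ (k+1) / ((k+1:ℕ) : ℂ) *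
      (2 * (((k+1:ℕ) : ℂ) * z) ^ (2*l+1) / ((2*l+1).factorial : ℂ)) *
      (1 - (r:ℂ) ^ (k+1))⁻¹ with hTdef
    have hD : ∀ k : ℕ, HasSum (T k) (G (k+1)) := by
      intro k
      have hs := aux_sinh_series (((k+1:ℕ) : ℂ) * z)
      have h2 := (hs.mul_left ((-1) ^ (k+1+1) * (a:ℂ) ^ (k+1) / ((k+1:ℕ) : ℂ))).mul_right
        ((1 - (r:ℂ) ^ (k+1))⁻¹)
      have hGm : G (k+1) = (-1) ^ (k+1+1) * (a:ℂ) ^ (k+1) / ((k+1:ℕ) : ℂ) *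
          (Complex.exp (((k+1:ℕ) : ℂ) * z) - Complex.exp (-(((k+1:ℕ) : ℂ) * z))) *
          (1 - (r:ℂ) ^ (k+1))⁻¹ := by rw [hGdef]
      rw [hGm]
      refine h2.congr_fun fun l => ?_
      rw [hTdef]
    have SE : ∑' (k : ℕ), G (k + 1) = ∑' (k : ℕ), ∑' (l : ℕ), T k l :=
      tsum_congr fun k => (hD k).tsum_eq.symm
    -- summability of T
    have hTsum : Summable (Function.uncurry T) := by
      set N : ℕ × ℕ → ℝ := fun p => (a ^ (p.1+1) / (1 - r)) *
        (2 * (((p.1+1:ℕ) : ℝ) * t) ^ (2*p.2+1) / ((2*p.2+1).factorial : ℝ)) with hNdef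
      have hNpos : ∀ p : ℕ × ℕ, 0 ≤ N p := by
        intro p
        rw [hNdef]
        positivity
      have hNsum : Summable N := by
        refine (summable_prod_of_nonneg (fun p => hNpos p)).2 ⟨?_, ?_⟩
        · intro k
          exact ((aux_sinh_series_real (((k+1:ℕ) : ℝ) * t)).mul_left
            (a ^ (k+1) / (1 - r))).summable
        · refine Summable.of_nonneg_of_le
            (fun k => tsum_nonneg fun l => hNpos (k, l)) (fun k => ?_)
            (((summable_geometric_of_lt_one hq0.le hq1).mul_left (q / (1 - r))))
          have hts := ((aux_sinh_series_real (((k+1:ℕ) : ℝ) * t)).mul_left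
            (a ^ (k+1) / (1 - r))).tsum_eq
          have hNk : ∑' (l : ℕ), N (k, l) = a ^ (k+1) / (1 - r) *
              (Real.exp (((k+1:ℕ) : ℝ) * t) - Real.exp (-(((k+1:ℕ) : ℝ) * t))) := by
            simp only [hNdef]
            exact hts
          rw [hNk]
          have hexppow : Real.exp (((k+1:ℕ) : ℝ) * t) = Real.exp t ^ (k+1) :=
            Real.exp_nat_mul t (k+1)
          have hkey : a ^ (k+1) / (1 - r) *
              (Real.exp (((k+1:ℕ) : ℝ) * t) - Real.exp (-(((k+1:ℕ) : ℝ) * t)))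
              ≤ a ^ (k+1) / (1 - r) * Real.exp t ^ (k+1) := by
            rw [← hexppow]
            apply mul_le_mul_of_nonneg_left _ (by positivity)
            have := Real.exp_pos (-(((k+1:ℕ) : ℝ) * t))
            linarith
          refine hkey.trans (le_of_eq ?_)
          rw [hqdef]
          rw [mul_pow]
          field_simp
          ring
      refine Summable.of_norm_bounded hNsum ?_
      rintro ⟨k, l⟩
      have h3 : (0:ℝ) < 1 - r ^ (k+1) := by
        have : r ^ (k+1) ≤ r := pow_le_of_le_one hr0.le hr1.le (Nat.succ_ne_zero k)
        linarith
      have hcast : (1 - (r:ℂ) ^ (k+1)) = (((1 - r ^ (k+1) : ℝ)) : ℂ) := by push_cast; ring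
      have hnormT : ‖Function.uncurry T (k, l)‖ = a ^ (k+1) / ((k:ℝ)+1) *
          (2 * (((k+1:ℕ) : ℝ) * t) ^ (2*l+1) / ((2*l+1).factorial : ℝ)) *
          (1 - r ^ (k+1))⁻¹ := by
        show ‖T k l‖ = _
        rw [hTdef]
        simp only []
        rw [hcast]
        simp only [norm_mul, norm_div, norm_pow, norm_neg, norm_one, norm_inv,
          Complex.norm_natCast, Complex.norm_real, Real.norm_eq_abs, one_pow,
          RCLike.norm_ofNat]
        rw [abs_of_pos ha0, abs_of_pos h3]
        push_cast
        ring
      rw [hnormT]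
      rw [hNdef]
      simp only []
      have e1 : a ^ (k+1) / ((k:ℝ)+1) ≤ a ^ (k+1) / 1 :=
        div_le_div_of_nonneg_left (by positivity) one_pos (by push_cast; linarith)
      have e2 : (1 - r ^ (k+1))⁻¹ ≤ (1 - r)⁻¹ := by
        apply inv_anti₀ h1r
        have : r ^ (k+1) ≤ r := pow_le_of_le_one hr0.le hr1.le (Nat.succ_ne_zero k)
        linarith
      calc a ^ (k+1) / ((k:ℝ)+1) *
          (2 * (((k+1:ℕ) : ℝ) * t) ^ (2*l+1) / ((2*l+1).factorial : ℝ)) * (1 - r ^ (k+1))⁻¹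
          ≤ (a ^ (k+1) / 1) *
          (2 * (((k+1:ℕ) : ℝ) * t) ^ (2*l+1) / ((2*l+1).factorial : ℝ)) * (1 - r)⁻¹ := by
            refine mul_le_mul (mul_le_mul e1 le_rfl (by positivity) (by positivity)) e2
              (by positivity) (by positivity)
        _ = (a ^ (k+1) / (1 - r)) *
          (2 * (((k+1:ℕ) : ℝ) * t) ^ (2*l+1) / ((2*l+1).factorial : ℝ)) := by
            rw [div_one, div_eq_mul_inv]
            ring
    have SF : ∑' (k : ℕ), ∑' (l : ℕ), T k l = ∑' (l : ℕ), ∑' (k : ℕ), T k l :=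
      (Summable.tsum_comm hTsum).symm
    -- per-l evaluation
    have SG : ∀ l : ℕ, ∑' (k : ℕ), T k l = (c l : ℂ) * z ^ (2*l+1) := by
      intro l
      have hterm : ∀ k : ℕ, T k l =
          ((((k + 1 : ℝ)) ^ (2 * l) * (-1 : ℝ) ^ k * a ^ (k + 1) / (1 - r ^ (k + 1)) : ℝ) : ℂ) *
          ((2 / ((2*l+1).factorial : ℝ) : ℝ) : ℂ) * z ^ (2*l+1) := by
        intro k
        have hk1 : ((k:ℂ)+1) ≠ 0 := by
          have h := (Nat.cast_ne_zero (R := ℂ)).2 (Nat.succ_ne_zero k)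
          push_cast at h
          exact h
        have h3 : (0:ℝ) < 1 - r ^ (k+1) := by
          have : r ^ (k+1) ≤ r := pow_le_of_le_one hr0.le hr1.le (Nat.succ_ne_zero k)
          linarith
        have h3' : (1 - (r:ℂ) ^ (k+1)) ≠ 0 := by
          have hcast : (1 - (r:ℂ) ^ (k+1)) = (((1 - r ^ (k+1) : ℝ)) : ℂ) := by push_cast; ring
          rw [hcast]
          exact_mod_cast h3.ne' 
        have hfacne : (((2*l+1).factorial : ℕ) : ℂ) ≠ 0 :=
          Nat.cast_ne_zero.2 (2*l+1).factorial_ne_zero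
        rw [hTdef]
        simp only []
        push_cast
        push_cast at hfacne
        rw [mul_pow ((k:ℂ)+1) z]
        field_simp
        ring
      rw [hc l, Complex.ofReal_mul, Complex.ofReal_tsum]
      calc ∑' (k : ℕ), T k l
          = ∑' (k : ℕ), ((((k + 1 : ℝ)) ^ (2 * l) * (-1 : ℝ) ^ k * a ^ (k + 1) /
            (1 - r ^ (k + 1)) : ℝ) : ℂ) *
            (((2 / ((2*l+1).factorial : ℝ) : ℝ) : ℂ) * z ^ (2*l+1)) := by
            refine tsum_congr fun k => ?_
            rw [hterm k]
            ring
        _ = (∑' (k : ℕ), ((((k + 1 : ℝ)) ^ (2 * l) * (-1 : ℝ) ^ k * a ^ (k + 1) /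
            (1 - r ^ (k + 1)) : ℝ) : ℂ)) *
            (((2 / ((2*l+1).factorial : ℝ) : ℝ) : ℂ) * z ^ (2*l+1)) := tsum_mul_right
        _ = ((2 / ((2*l+1).factorial : ℝ) : ℝ) : ℂ) *
            (∑' (k : ℕ), ((((k + 1 : ℝ)) ^ (2 * l) * (-1 : ℝ) ^ k * a ^ (k + 1) /
            (1 - r ^ (k + 1)) : ℝ) : ℂ)) * z ^ (2*l+1) := by ring
    calc S z = ∑' (j : ℕ), ∑' (n : ℕ), F j n := SA
      _ = ∑' (n : ℕ), ∑' (j : ℕ), F j n := SB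
      _ = ∑' (n : ℕ), G n := SC
      _ = ∑' (k : ℕ), G (k + 1) := SD
      _ = ∑' (k : ℕ), ∑' (l : ℕ), T k l := SE
      _ = ∑' (l : ℕ), ∑' (k : ℕ), T k l := SF
      _ = ∑' (l : ℕ), (c l : ℂ) * z ^ (2*l+1) := tsum_congr SG
  · intro l hl
    rw [hc l]
    exact aux_coeff_bound hδ0 hδ1 hr0 hr1 ha0 ha1 l hl
end

section
/- Let δ ∈ (0,1) and suppose a : (0,1) → (0, 1−δ] satisfies a(r) → a₁ ∈ (0, 1−δ] as r → 1⁻. Define c_1(r) = 2 ∑_{k=1}^∞ (−1)^{k+1} a(r)^k / (1 − r^k) and c_3(r) = (1/3) ∑_{k=1}^∞ k² (−1)^{k+1} a(r)^k / (1 − r^k). Then (1−r) c_1(r) → 2 log(1 + a₁) and (1−r) c_3(r) → (1/3) · a₁ / (1 + a₁)² as r → 1⁻. -/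
open Filter

private lemma aux_tendsto (δ : ℝ) (hδ : δ ∈ Set.Ioo (0:ℝ) 1) (a : ℝ → ℝ) (a₁ : ℝ)
    (ha : ∀ r ∈ Set.Ioo (0:ℝ) 1, a r ∈ Set.Ioc (0:ℝ) (1 - δ))
    (halim : Tendsto a (nhdsWithin 1 (Set.Ioo (0:ℝ) 1)) (nhds a₁))
    (w : ℕ → ℝ) (hw : Summable (fun k : ℕ => |w k| * (1-δ)^(k+1))) :
    Tendsto (fun r : ℝ => ∑' k : ℕ, w k * ((-1:ℝ)^k * (a r)^(k+1)) * ((1-r)/(1-r^(k+1))))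
      (nhdsWithin 1 (Set.Ioo (0:ℝ) 1))
      (nhds (∑' k : ℕ, w k * ((-1:ℝ)^k * a₁^(k+1)) * (1/((k:ℝ)+1)))) := by
  apply tendsto_tsum_of_dominated_convergence hw
  · intro k
    have h2 : Tendsto (fun r : ℝ => (1-r)/(1-r^(k+1)))
        (nhdsWithin 1 (Set.Ioo (0:ℝ) 1)) (nhds (1/((k:ℝ)+1))) := by
      have hcong : ∀ r ∈ Set.Ioo (0:ℝ) 1,
          (∑ i ∈ Finset.range (k+1), r^i)⁻¹ = (1-r)/(1-r^(k+1)) := by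
        intro r hr
        have hr1 : (1:ℝ) - r ≠ 0 := by have := hr.2; intro h; nlinarith
        have hmul : (1-r) * ∑ i ∈ Finset.range (k+1), r^i = 1 - r^(k+1) := by
          have := geom_sum_mul r (k+1)
          nlinarith [this]
        have hS : (0:ℝ) < ∑ i ∈ Finset.range (k+1), r^i := by
          apply Finset.sum_pos
          · intro i _; exact pow_pos hr.1 i
          · exact Finset.nonempty_range_iff.mpr (Nat.succ_ne_zero k)
        rw [← hmul]
        field_simp
      have hcont : Tendsto (fun r : ℝ => (∑ i ∈ Finset.range (k+1), r^i)⁻¹)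
          (nhdsWithin 1 (Set.Ioo (0:ℝ) 1)) (nhds (1/((k:ℝ)+1))) := by
        have h1 : Tendsto (fun r : ℝ => ∑ i ∈ Finset.range (k+1), r^i)
            (nhdsWithin 1 (Set.Ioo (0:ℝ) 1)) (nhds ((k:ℝ)+1)) := by
          have : ContinuousAt (fun r : ℝ => ∑ i ∈ Finset.range (k+1), r^i) 1 := by
            fun_prop
          have h := this.continuousWithinAt.tendsto (s := Set.Ioo (0:ℝ) 1)
          simpa using h
        have hne : ((k:ℝ)+1) ≠ 0 := by positivity
        simpa [one_div] using h1.inv₀ hne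
      exact hcont.congr' (by filter_upwards [self_mem_nhdsWithin] with r hr using hcong r hr)
    have h1 : Tendsto (fun r : ℝ => w k * ((-1:ℝ)^k * (a r)^(k+1)))
        (nhdsWithin 1 (Set.Ioo (0:ℝ) 1)) (nhds (w k * ((-1:ℝ)^k * a₁^(k+1)))) :=
      (tendsto_const_nhds.mul (tendsto_const_nhds.mul (halim.pow (k+1))))
    exact h1.mul h2
  · filter_upwards [self_mem_nhdsWithin] with r hr
    intro k
    obtain ⟨har0, har1⟩ := ha r hr
    have hr0 := hr.1
    have hr1 := hr.2
    have hpow : r^(k+1) ≤ r := by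
      calc r^(k+1) ≤ r^1 := pow_le_pow_of_le_one hr0.le hr1.le (by omega)
      _ = r := pow_one r
    have hden : (0:ℝ) < 1 - r^(k+1) := by nlinarith
    have hq0 : (0:ℝ) ≤ (1-r)/(1-r^(k+1)) := div_nonneg (by linarith) hden.le
    have hq1 : (1-r)/(1-r^(k+1)) ≤ 1 := by
      rw [div_le_one hden]; linarith
    have : ‖w k * ((-1:ℝ)^k * (a r)^(k+1)) * ((1-r)/(1-r^(k+1)))‖
        = |w k| * (a r)^(k+1) * ((1-r)/(1-r^(k+1))) := by
      rw [Real.norm_eq_abs, abs_mul, abs_mul, abs_mul, abs_pow, abs_pow, abs_neg, abs_one,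
        one_pow, one_mul, abs_of_pos har0, abs_of_nonneg hq0]
    rw [this]
    calc |w k| * (a r)^(k+1) * ((1-r)/(1-r^(k+1)))
        ≤ |w k| * (1-δ)^(k+1) * 1 := by
          have hδ0 : (0:ℝ) ≤ 1 - δ := by have := hδ.2; linarith
          gcongr
      _ = |w k| * (1-δ)^(k+1) := mul_one _

theorem stmt_7 (δ : ℝ) (hδ : δ ∈ Set.Ioo (0:ℝ) 1) (a : ℝ → ℝ) (a₁ : ℝ)
    (ha : ∀ r ∈ Set.Ioo (0:ℝ) 1, a r ∈ Set.Ioc (0:ℝ) (1 - δ))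
    (ha₁ : a₁ ∈ Set.Ioc (0:ℝ) (1 - δ))
    (halim : Tendsto a (nhdsWithin 1 (Set.Ioo (0:ℝ) 1)) (nhds a₁)) :
    Tendsto (fun r : ℝ =>
        (1 - r) * (2 * ∑' k : ℕ, (-1 : ℝ) ^ k * (a r) ^ (k + 1) / (1 - r ^ (k + 1))))
      (nhdsWithin 1 (Set.Ioo (0:ℝ) 1)) (nhds (2 * Real.log (1 + a₁))) ∧
    Tendsto (fun r : ℝ =>
        (1 - r) * ((1/3 : ℝ) * ∑' k : ℕ,
          ((k + 1 : ℝ)) ^ 2 * (-1 : ℝ) ^ k * (a r) ^ (k + 1) / (1 - r ^ (k + 1))))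
      (nhdsWithin 1 (Set.Ioo (0:ℝ) 1)) (nhds ((1/3 : ℝ) * (a₁ / (1 + a₁) ^ 2))) := by
  have hδ1 : (0:ℝ) < 1 - δ := by have := hδ.2; linarith
  have ha₁abs : |(-a₁ : ℝ)| < 1 := by
    rw [abs_neg, abs_of_pos ha₁.1]
    have := ha₁.2; have := hδ.1; linarith
  constructor
  · -- first limit
    have hw : Summable (fun k : ℕ => |(1:ℝ)| * (1-δ)^(k+1)) := by
      simpa using (summable_geometric_of_lt_one hδ1.le (by have := hδ.1; linarith)
        |>.mul_left (1-δ)).congr (fun k => by rw [pow_succ]; ring)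
    have haux := aux_tendsto δ hδ a a₁ ha halim (fun _ => 1) hw
    have hsum : HasSum (fun k : ℕ => (1:ℝ) * ((-1:ℝ)^k * a₁^(k+1)) * (1/((k:ℝ)+1)))
        (Real.log (1 + a₁)) := by
      have h := (Real.hasSum_pow_div_log_of_abs_lt_one ha₁abs).neg
      rw [sub_neg_eq_add, neg_neg] at h
      refine h.congr_fun fun n => ?_
      rw [show ((-a₁):ℝ)^(n+1) = (-1)^(n+1) * a₁^(n+1) from by rw [neg_pow], pow_succ]
      ring
    rw [hsum.tsum_eq] at haux
    have := haux.const_mul (2:ℝ)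
    refine this.congr' ?_
    filter_upwards [self_mem_nhdsWithin] with r hr
    rw [← tsum_mul_left, ← tsum_mul_left, ← tsum_mul_left]
    congr 1
    funext k
    ring
  · -- second limit
    have hw : Summable (fun k : ℕ => |((k:ℝ)+1)^2| * (1-δ)^(k+1)) := by
      have h := summable_pow_mul_geometric_of_norm_lt_one (R := ℝ) 2
        (r := 1-δ) (by rw [Real.norm_eq_abs, abs_of_pos hδ1]; have := hδ.1; linarith)
      have h2 := (summable_nat_add_iff 1).mpr h
      refine h2.congr fun k => ?_
      have : (0:ℝ) ≤ ((k:ℝ)+1)^2 := by positivity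
      rw [abs_of_nonneg this]
      push_cast
      ring
    have haux := aux_tendsto δ hδ a a₁ ha halim (fun k => ((k:ℝ)+1)^2) hw
    have hsum : HasSum (fun k : ℕ => ((k:ℝ)+1)^2 * ((-1:ℝ)^k * a₁^(k+1)) * (1/((k:ℝ)+1)))
        (a₁ / (1 + a₁)^2) := by
      have h := hasSum_choose_mul_geometric_of_norm_lt_one (𝕜 := ℝ) 1 (r := -a₁)
        (by rwa [Real.norm_eq_abs])
      rw [sub_neg_eq_add] at h
      have h2 := h.mul_left a₁
      rw [mul_one_div] at h2
      refine h2.congr_fun fun n => ?_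
      have hn : ((n:ℝ)+1) ≠ 0 := by positivity
      rw [Nat.choose_one_right]
      push_cast
      rw [neg_pow a₁]
      field_simp
      ring
    rw [hsum.tsum_eq] at haux
    have := haux.const_mul ((1:ℝ)/3)
    refine this.congr' ?_
    filter_upwards [self_mem_nhdsWithin] with r hr
    rw [← tsum_mul_left, ← tsum_mul_left, ← tsum_mul_left]
    congr 1
    funext k
    ring
end

section
/- Fix τ ∈ ℝ \ {0}. For r ∈ (0,1) set a(r) = exp( (log r)(1/2 + (1/2)|⌊τ/(1−r)⌋|) ) and c_1(r) = 2 ∑_{k=1}^∞ (−1)^{k+1} a(r)^k / (1 − r^k). Then c_1(r) − 2 log(1 + e^{−|τ|/2})/(1−r) stays bounded as r → 1⁻ (the bound depending on τ). -/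
open Filter

lemma aux_one_sub_pow_le (r : ℝ) (hr0 : 0 ≤ r) (hr1 : r ≤ 1) :
    ∀ n : ℕ, 1 - r ^ n ≤ n * (1 - r) := by
  intro n
  induction n with
  | zero => simp
  | succ n ih =>
    have h1 : r ^ n ≤ 1 := pow_le_one₀ hr0 hr1
    have h2 : 0 ≤ r ^ n := pow_nonneg hr0 n
    push_cast
    rw [pow_succ]
    nlinarith

lemma aux_le_one_sub_pow (r : ℝ) (hr0 : 0 ≤ r) (hr1 : r ≤ 1) :
    ∀ n : ℕ, ((n : ℝ) + 1) * (1 - r) * r ^ n ≤ 1 - r ^ (n + 1) := by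
  intro n
  induction n with
  | zero => simp [pow_succ]
  | succ n ih =>
    have h1 : r ^ (n + 1) ≤ 1 := pow_le_one₀ hr0 hr1
    have h2 : 0 ≤ r ^ n := pow_nonneg hr0 n
    have h3 := mul_le_mul_of_nonneg_left ih hr0
    push_cast
    rw [pow_succ, pow_succ]
    nlinarith [pow_succ r n, pow_succ r (n+1)]

lemma aux_exp_lip {u v : ℝ} (hu : u ≤ 0) (hv : v ≤ 0) :
    |Real.exp u - Real.exp v| ≤ |u - v| := by
  rcases le_total u v with h | h
  · have h1 : Real.exp u ≤ Real.exp v := Real.exp_le_exp.2 h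
    have h2 : Real.exp v ≤ 1 := Real.exp_le_one_iff.2 hv
    have h3 := Real.add_one_le_exp (u - v)
    have h4 := Real.exp_pos v
    rw [abs_of_nonpos (by linarith), abs_of_nonpos (by linarith)]
    have h5 : Real.exp (u - v) = Real.exp u / Real.exp v := Real.exp_sub u v
    rw [h5] at h3
    have h6 : (u - v + 1) * Real.exp v ≤ Real.exp u := (le_div_iff₀ h4).mp h3
    nlinarith
  · have h1 : Real.exp v ≤ Real.exp u := Real.exp_le_exp.2 h
    have h2 : Real.exp u ≤ 1 := Real.exp_le_one_iff.2 hu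
    have h3 := Real.add_one_le_exp (v - u)
    have h4 := Real.exp_pos u
    have h5 : Real.exp (v - u) = Real.exp v / Real.exp u := Real.exp_sub v u
    rw [h5] at h3
    have h6 : (v - u + 1) * Real.exp u ≤ Real.exp v := (le_div_iff₀ h4).mp h3
    rw [abs_of_nonneg (by linarith), abs_of_nonneg (by linarith)]
    nlinarith

lemma aux_log_lip_aux {a b : ℝ} (ha : 0 ≤ a) (hab : a ≤ b) :
    Real.log (1 + b) - Real.log (1 + a) ≤ b - a := by
  have h1 : (0:ℝ) < 1 + a := by linarith
  have h2 : (0:ℝ) < 1 + b := by linarith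
  have h3 : Real.log (1 + b) - Real.log (1 + a) = Real.log ((1 + b) / (1 + a)) := by
    rw [Real.log_div h2.ne' h1.ne']
  rw [h3]
  have h4 := Real.log_le_sub_one_of_pos (div_pos h2 h1)
  have h5 : (1 + b) / (1 + a) - 1 = (b - a) / (1 + a) := by field_simp; ring
  have h6 : (b - a) / (1 + a) ≤ b - a := by
    apply div_le_self (by linarith) (by linarith)
  linarith

lemma aux_log_lip {a b : ℝ} (ha : 0 ≤ a) (hb : 0 ≤ b) :
    |Real.log (1 + a) - Real.log (1 + b)| ≤ |a - b| := by
  rcases le_total a b with h | h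
  · have h1 : Real.log (1 + a) ≤ Real.log (1 + b) :=
      Real.log_le_log (by linarith) (by linarith)
    rw [abs_of_nonpos (by linarith), abs_of_nonpos (by linarith)]
    linarith [aux_log_lip_aux ha h]
  · have h1 : Real.log (1 + b) ≤ Real.log (1 + a) :=
      Real.log_le_log (by linarith) (by linarith)
    rw [abs_of_nonneg (by linarith), abs_of_nonneg (by linarith)]
    linarith [aux_log_lip_aux hb h]

set_option maxHeartbeats 2000000 in
lemma aux_key (τ r : ℝ) (hτ : τ ≠ 0) (hr0 : 0 < r) (hr1 : r < 1)
    (hr2 : 1/2 ≤ r) (hr3 : 1 - r ≤ |τ|/4) :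
    |(2 * ∑' k : ℕ, (-1 : ℝ) ^ k *
          (Real.exp (Real.log r * (1/2 + (1/2) * |(⌊τ / (1 - r)⌋ : ℝ)|))) ^ (k + 1)
            / (1 - r ^ (k + 1)))
        - 2 * Real.log (1 + Real.exp (-|τ| / 2)) / (1 - r)|
      ≤ (4 + 2 * |τ|) + 2 / (1 - Real.exp (-|τ|/4)) := by
  have hτ0 : 0 < |τ| := abs_pos.2 hτ
  have h1r : 0 < 1 - r := by linarith
  have h1r2 : 1 - r ≤ 1/2 := by linarith
  set m : ℝ := |(⌊τ / (1 - r)⌋ : ℝ)| with hmdef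
  have hm0 : 0 ≤ m := abs_nonneg _
  -- floor bounds
  have hx : |τ / (1 - r)| = |τ| / (1 - r) := by rw [abs_div, abs_of_pos h1r]
  have hfl : |(⌊τ / (1 - r)⌋ : ℝ) - τ / (1 - r)| ≤ 1 := by
    have h1 := Int.floor_le (τ / (1 - r))
    have h2 := Int.lt_floor_add_one (τ / (1 - r))
    rw [abs_le]; constructor <;> linarith
  have hm1 : |τ| ≤ (m + 1) * (1 - r) := by
    have h' : |τ / (1 - r)| - m ≤ |τ / (1 - r) - (⌊τ / (1 - r)⌋ : ℝ)| :=
      abs_sub_abs_le_abs_sub _ _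
    rw [hx, abs_sub_comm] at h'
    have h'' : |τ| / (1 - r) ≤ m + 1 := by linarith [hfl]
    have := (div_le_iff₀ h1r).mp h''
    linarith
  have hm2 : m * (1 - r) ≤ |τ| + (1 - r) := by
    have h' : m - |τ / (1 - r)| ≤ |(⌊τ / (1 - r)⌋ : ℝ) - τ / (1 - r)| :=
      abs_sub_abs_le_abs_sub _ _
    rw [hx] at h'
    have h'' : m ≤ |τ| / (1 - r) + 1 := by linarith [hfl]
    have h3 := mul_le_mul_of_nonneg_right h'' h1r.le
    rw [add_mul, div_mul_cancel₀ _ h1r.ne'] at h3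
    linarith
  -- log bounds
  have hlog_le : Real.log r ≤ -(1 - r) := by
    have := Real.log_le_sub_one_of_pos hr0; linarith
  have hlog_ge : 1 - 1/r ≤ Real.log r := by
    have h := Real.log_le_sub_one_of_pos (inv_pos.2 hr0)
    rw [Real.log_inv] at h
    rw [inv_eq_one_div] at h
    linarith
  have hinv : 1/r ≤ 1 + 2 * (1 - r) := by
    rw [div_le_iff₀ hr0]; nlinarith
  have hlog0 : Real.log r ≤ 0 := by linarith
  set u : ℝ := Real.log r * (1/2 + (1/2) * m) with hudef
  set a : ℝ := Real.exp u with hadef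
  have ha0 : 0 < a := Real.exp_pos u
  set ρ : ℝ := Real.exp (-|τ|/4) with hρdef
  have hρ0 : 0 < ρ := Real.exp_pos _
  have hρ1 : ρ < 1 := by rw [hρdef, Real.exp_lt_one_iff]; linarith
  -- a ≤ r * ρ
  have hm3 : 3 ≤ m := by nlinarith
  have hau : u ≤ Real.log r + (-|τ|/4) := by
    have h1 : Real.log r * (m - 1) ≤ -(1 - r) * (m - 1) :=
      mul_le_mul_of_nonneg_right hlog_le (by linarith)
    have h2 : -(1 - r) * (m - 1) ≤ -|τ|/2 := by linarith [hm1]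
    rw [hudef]; linarith
  have har : a ≤ r * ρ := by
    rw [hadef, hρdef]
    calc Real.exp u ≤ Real.exp (Real.log r + (-|τ|/4)) := Real.exp_le_exp.2 hau
      _ = r * Real.exp (-|τ|/4) := by rw [Real.exp_add, Real.exp_log hr0]
  have haρ : a ≤ ρ := le_trans har (mul_le_of_le_one_left hρ0.le hr1.le)
  have ha1 : a < 1 := lt_of_le_of_lt haρ hρ1
  have hu0 : u ≤ 0 := by
    rw [hudef]; apply mul_nonpos_of_nonpos_of_nonneg hlog0; linarith
  -- u close to -|τ|/2
  have huτ : |u - (-|τ|/2)| ≤ (2 + |τ|) * (1 - r) := by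
    rw [abs_le]; constructor
    · -- lower bound
      have e1 : (1 - r) * (1 + m) ≤ |τ| + 2 * (1 - r) := by nlinarith
      have e2 : (1/r) * ((1 - r) * (1 + m)) ≤ (1 + 2 * (1 - r)) * (|τ| + 2 * (1 - r)) :=
        mul_le_mul hinv e1 (by positivity) (by positivity)
      have e3 : (1 - 1/r) * (1/2 + (1/2) * m) ≤ u :=
        mul_le_mul_of_nonneg_right hlog_ge (by linarith)
      have e5 : (1 - 1/r) * (1/2 + (1/2) * m) = -((1/r) * ((1 - r) * (1 + m))) / 2 := by
        field_simp; ring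
      rw [e5] at e3
      have e6 : -((1 + 2 * (1 - r)) * (|τ| + 2 * (1 - r))) / 2 ≤ u := by linarith
      have e7 : (1 - r) * (1 - r) ≤ (1 - r) * (1/2) := mul_le_mul_of_nonneg_left h1r2 h1r.le
      nlinarith [e6, e7]
    · -- upper bound
      have e1 : u ≤ -(1 - r) * (1/2 + (1/2) * m) := by
        rw [hudef]; exact mul_le_mul_of_nonneg_right hlog_le (by linarith)
      have e2 : (0:ℝ) ≤ (2 + |τ|) * (1 - r) := by positivity
      linarith [hm1]
  -- log(1+a) close to L
  set L : ℝ := Real.log (1 + Real.exp (-|τ|/2)) with hLdef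
  have hL : |Real.log (1 + a) - L| ≤ (2 + |τ|) * (1 - r) := by
    calc |Real.log (1 + a) - L| ≤ |a - Real.exp (-|τ|/2)| :=
          aux_log_lip ha0.le (Real.exp_pos _).le
      _ = |Real.exp u - Real.exp (-|τ|/2)| := by rw [hadef]
      _ ≤ |u - (-|τ|/2)| := aux_exp_lip hu0 (by linarith)
      _ ≤ (2 + |τ|) * (1 - r) := huτ
  -- geometric bounds
  have hgeom_ub : ∀ n : ℕ, 1 - r ^ n ≤ n * (1 - r) := aux_one_sub_pow_le r hr0.le hr1.le
  have hgeom_lb : ∀ n : ℕ, ((n : ℝ) + 1) * (1 - r) * r ^ n ≤ 1 - r ^ (n + 1) :=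
    aux_le_one_sub_pow r hr0.le hr1.le
  have hDpos : ∀ k : ℕ, 0 < 1 - r ^ (k + 1) := by
    intro k
    have := pow_lt_one₀ hr0.le hr1 (show k + 1 ≠ 0 by omega)
    linarith
  -- HasSum for the main part
  have hg : HasSum (fun k : ℕ => (-1 : ℝ) ^ k * a ^ (k + 1) / (((k : ℝ) + 1) * (1 - r)))
      (Real.log (1 + a) / (1 - r)) := by
    have h0 := Real.hasSum_pow_div_log_of_abs_lt_one (x := -a)
      (by rw [abs_neg, abs_of_pos ha0]; exact ha1)
    have h1 := (h0.neg).div_const (1 - r)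
    have h2 : -(-Real.log (1 - -a)) / (1 - r) = Real.log (1 + a) / (1 - r) := by
      rw [neg_neg, sub_neg_eq_add]
    rw [h2] at h1
    have h3 : (fun n : ℕ => -((-a) ^ (n + 1) / ((n : ℝ) + 1)) / (1 - r))
        = fun k : ℕ => (-1 : ℝ) ^ k * a ^ (k + 1) / (((k : ℝ) + 1) * (1 - r)) := by
      funext k
      have hp : (-a : ℝ) ^ (k + 1) = (-1 : ℝ) ^ (k + 1) * a ^ (k + 1) := by
        rw [neg_pow]
      have hk1 : ((k : ℝ) + 1) ≠ 0 := by positivity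
      rw [hp, pow_succ (-1 : ℝ) k]
      field_simp
    rw [h3] at h1
    exact h1
  -- the remainder
  set φ : ℕ → ℝ := fun k => (-1 : ℝ) ^ k * a ^ (k + 1) / (1 - r ^ (k + 1))
      - (-1 : ℝ) ^ k * a ^ (k + 1) / (((k : ℝ) + 1) * (1 - r)) with hφdef
  have hφb : ∀ k, |φ k| ≤ ρ ^ k := by
    intro k
    have hD1 := hDpos k
    have hlb := hgeom_lb k
    have hub : 1 - r ^ k ≤ (k : ℝ) * (1 - r) := hgeom_ub k
    have hrk : 0 < r ^ k := pow_pos hr0 k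
    have hD2 : (0 : ℝ) < ((k : ℝ) + 1) * (1 - r) := by positivity
    have hdiff : |1 / (1 - r ^ (k + 1)) - 1 / (((k : ℝ) + 1) * (1 - r))| ≤ 1 / r ^ k := by
      have hmono : 1 / (((k : ℝ) + 1) * (1 - r)) ≤ 1 / (1 - r ^ (k + 1)) := by
        apply one_div_le_one_div_of_le hD1
        have h4 := hgeom_ub (k + 1)
        push_cast at h4
        linarith
      rw [abs_of_nonneg (by linarith)]
      have heq : 1 / (1 - r ^ (k + 1)) - 1 / (((k : ℝ) + 1) * (1 - r))
          = ((((k : ℝ) + 1) * (1 - r)) - (1 - r ^ (k + 1)))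
              / ((1 - r ^ (k + 1)) * (((k : ℝ) + 1) * (1 - r))) := by
        field_simp
      rw [heq, div_le_div_iff₀ (by positivity) hrk]
      nlinarith [mul_le_mul_of_nonneg_right hlb hrk.le,
        mul_le_mul_of_nonneg_left (mul_le_mul_of_nonneg_right hub hrk.le) hD2.le,
        mul_le_mul_of_nonneg_left hlb hD2.le,
        mul_nonneg (mul_nonneg hD2.le h1r.le) hrk.le,
        mul_pos hD2 hrk]
    have hid : φ k = (-1 : ℝ) ^ k * (a ^ (k + 1)
        * (1 / (1 - r ^ (k + 1)) - 1 / (((k : ℝ) + 1) * (1 - r)))) := by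
      simp only [hφdef]
      ring
    rw [hid, abs_mul, abs_pow, abs_neg, abs_one, one_pow, one_mul, abs_mul, abs_pow,
      abs_of_pos ha0]
    calc a ^ (k + 1) * |1 / (1 - r ^ (k + 1)) - 1 / (((k : ℝ) + 1) * (1 - r))|
        ≤ a ^ (k + 1) * (1 / r ^ k) := mul_le_mul_of_nonneg_left hdiff (by positivity)
      _ = a * (a / r) ^ k := by rw [div_pow, pow_succ]; ring
      _ ≤ 1 * ρ ^ k := by
          apply mul_le_mul ha1.le ?_ (by positivity) zero_le_one
          exact pow_le_pow_left₀ (by positivity) ((div_le_iff₀ hr0).2 (by linarith [har])) k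
      _ = ρ ^ k := one_mul _
  have hgeo : Summable (fun k : ℕ => ρ ^ k) := summable_geometric_of_lt_one hρ0.le hρ1
  have hφabs : Summable (fun k => |φ k|) :=
    Summable.of_nonneg_of_le (fun k => abs_nonneg _) hφb hgeo
  have hφsum : Summable φ := hφabs.of_abs
  have hφt : |∑' k : ℕ, φ k| ≤ (1 - ρ)⁻¹ := by
    have hn : Summable fun k : ℕ => ‖φ k‖ := by simpa [Real.norm_eq_abs] using hφabs
    have h0 := norm_tsum_le_tsum_norm hn
    rw [Real.norm_eq_abs] at h0
    calc |∑' k : ℕ, φ k| ≤ ∑' k : ℕ, ‖φ k‖ := h0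
      _ = ∑' k : ℕ, |φ k| := by simp [Real.norm_eq_abs]
      _ ≤ ∑' k : ℕ, ρ ^ k := Summable.tsum_le_tsum hφb hφabs hgeo
      _ = (1 - ρ)⁻¹ := tsum_geometric_of_lt_one hρ0.le hρ1
  -- combine
  have hfeq : (fun k : ℕ => (-1 : ℝ) ^ k * a ^ (k + 1) / (1 - r ^ (k + 1)))
      = fun k : ℕ => ((-1 : ℝ) ^ k * a ^ (k + 1) / (((k : ℝ) + 1) * (1 - r))) + φ k := by
    funext k; rw [hφdef]; ring
  have htsum : ∑' k : ℕ, (-1 : ℝ) ^ k * a ^ (k + 1) / (1 - r ^ (k + 1))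
      = Real.log (1 + a) / (1 - r) + ∑' k : ℕ, φ k := by
    rw [hfeq, Summable.tsum_add hg.summable hφsum, hg.tsum_eq]
  rw [htsum]
  have hsplit : 2 * (Real.log (1 + a) / (1 - r) + ∑' k : ℕ, φ k) - 2 * L / (1 - r)
      = (2 * (Real.log (1 + a) - L)) / (1 - r) + 2 * (∑' k : ℕ, φ k) := by ring
  rw [hsplit]
  calc |(2 * (Real.log (1 + a) - L)) / (1 - r) + 2 * (∑' k : ℕ, φ k)|
      ≤ |(2 * (Real.log (1 + a) - L)) / (1 - r)| + |2 * (∑' k : ℕ, φ k)| := abs_add_le _ _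
    _ ≤ (4 + 2 * |τ|) + 2 / (1 - ρ) := by
        have h1 : |(2 * (Real.log (1 + a) - L)) / (1 - r)| ≤ 4 + 2 * |τ| := by
          rw [abs_div, abs_of_pos h1r, div_le_iff₀ h1r, abs_mul]
          have : |(2:ℝ)| = 2 := by norm_num
          rw [this]
          nlinarith
        have h2 : |2 * (∑' k : ℕ, φ k)| ≤ 2 / (1 - ρ) := by
          rw [abs_mul]
          have : |(2:ℝ)| = 2 := by norm_num
          rw [this, div_eq_mul_inv]
          nlinarith [abs_nonneg (∑' k : ℕ, φ k)]
        linarith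
    _ = (4 + 2 * |τ|) + 2 / (1 - Real.exp (-|τ|/4)) := by rw [hρdef]



theorem stmt_8 (τ : ℝ) (hτ : τ ≠ 0) :
    ∃ C : ℝ, ∀ᶠ r in nhdsWithin 1 (Set.Ioo (0:ℝ) 1),
      |(2 * ∑' k : ℕ, (-1 : ℝ) ^ k *
          (Real.exp (Real.log r * (1/2 + (1/2) * |(⌊τ / (1 - r)⌋ : ℝ)|))) ^ (k + 1)
            / (1 - r ^ (k + 1)))
        - 2 * Real.log (1 + Real.exp (-|τ| / 2)) / (1 - r)| ≤ C := by
  refine ⟨(4 + 2 * |τ|) + 2 / (1 - Real.exp (-|τ|/4)), ?_⟩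
  have hτ0 : 0 < |τ| := abs_pos.2 hτ
  have h1 : ∀ᶠ r in nhdsWithin 1 (Set.Ioo (0:ℝ) 1), r ∈ Set.Ioo (0:ℝ) 1 :=
    eventually_mem_nhdsWithin
  have h2 : ∀ᶠ r : ℝ in nhds 1, 1 - min (1/2) (|τ|/4) < r := by
    apply eventually_gt_nhds
    have := lt_min (show (0:ℝ) < 1/2 by norm_num) (show (0:ℝ) < |τ|/4 by positivity)
    linarith
  have h3 : ∀ᶠ r in nhdsWithin 1 (Set.Ioo (0:ℝ) 1), 1 - min (1/2) (|τ|/4) < r :=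
    h2.filter_mono nhdsWithin_le_nhds
  filter_upwards [h1, h3] with r hr hr'
  exact aux_key τ r hτ hr.1 hr.2
    (by have := min_le_left (1/2:ℝ) (|τ|/4); linarith)
    (by have := min_le_right (1/2:ℝ) (|τ|/4); linarith)
end

section
/- Let t ∈ (0,1), β ≥ 0, and suppose t is close enough to 1 that |β|(−log t) lies in the strip of analyticity of S_{a,r} (with a ∈ (0,1−δ], r ∈ (0,1)). For s ∈ ℝ set z(s) = (−log t)(β + i s). Then d/ds Re(S_{a,r}(z(s))) ≤ 0 for s ∈ [0, π(−log t)^{−1}] and d/ds Re(S_{a,r}(z(s))) ≥ 0 for s ∈ [−π(−log t)^{−1}, 0]. If instead β ≤ 0, both inequalities are reversed. -/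
noncomputable def auxA (L b u s : ℝ) : ℝ := 1 + 2*(b*u)*Real.cos (L*s) + (b*u)^2

lemma auxA_ge (L b u s : ℝ) (hbu : 0 ≤ b*u) : (1 - b*u)^2 ≤ auxA L b u s := by
  have h := Real.neg_one_le_cos (L*s)
  simp only [auxA]; nlinarith

lemma auxA_le (L b u s : ℝ) (hbu : 0 ≤ b*u) : auxA L b u s ≤ (1 + b*u)^2 := by
  have h := Real.cos_le_one (L*s)
  simp only [auxA]; nlinarith

lemma auxA_pos (L b u s : ℝ) (hbu : 0 ≤ b*u) (hbu1 : b*u < 1) : 0 < auxA L b u s :=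
  lt_of_lt_of_le (by nlinarith) (auxA_ge L b u s hbu)

lemma auxA_hasDeriv (L b u s : ℝ) :
    HasDerivAt (fun s' => auxA L b u s') (2*b*u*(-Real.sin (L*s)*L)) s := by
  have h1 : HasDerivAt (fun s' : ℝ => L * s') L s := by
    simpa using (hasDerivAt_id s).const_mul L
  have h2 := h1.cos
  have h3 := ((h2.const_mul (2*(b*u))).const_add 1).add_const ((b*u)^2)
  simp only [auxA]
  refine h3.congr_deriv ?_
  ring

noncomputable def auxD (L b u s : ℝ) : ℝ :=
  -(b*L*Real.sin (L*s)) * ((u - u⁻¹)*(1-b^2)/(auxA L b u s * auxA L b u⁻¹ s))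

lemma auxF_hasDeriv (L b u s : ℝ) (hb : 0 < b) (hu : 0 < u)
    (hbu1 : b*u < 1) (hbu2 : b*u⁻¹ < 1) :
    HasDerivAt (fun s' => (Real.log (auxA L b u s') - Real.log (auxA L b u⁻¹ s'))/2)
      (auxD L b u s) s := by
  have hu' : 0 < u⁻¹ := inv_pos.mpr hu
  have hA1 : 0 < auxA L b u s := auxA_pos _ _ _ _ (by positivity) hbu1
  have hA2 : 0 < auxA L b u⁻¹ s := auxA_pos _ _ _ _ (by positivity) hbu2
  have d1 := (auxA_hasDeriv L b u s).log hA1.ne'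
  have d2 := (auxA_hasDeriv L b u⁻¹ s).log hA2.ne'
  have h3 := (d1.sub d2).div_const 2
  refine h3.congr_deriv ?_
  have huu : u * u⁻¹ = 1 := mul_inv_cancel₀ hu.ne'
  have key : u * auxA L b u⁻¹ s - u⁻¹ * auxA L b u s = (u - u⁻¹)*(1-b^2) := by
    simp only [auxA]
    linear_combination b^2*(u⁻¹-u) * huu
  simp only [auxD]
  rw [div_sub_div _ _ hA1.ne' hA2.ne']
  have hnum : 2*b*u*(-Real.sin (L*s)*L) * auxA L b u⁻¹ s - auxA L b u s * (2*b*u⁻¹*(-Real.sin (L*s)*L))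
      = (-(2*b*Real.sin (L*s)*L)) * ((u - u⁻¹)*(1-b^2)) := by
    linear_combination (-(2*b*Real.sin (L*s)*L)) * key
  rw [hnum]
  ring

lemma aux_abs_log_le {p v h : ℝ} (hv : 0 ≤ v) (hvh : v ≤ h) (hh : h < 1)
    (h1 : (1-v)^2 ≤ p) (h2 : p ≤ (1+v)^2) : |Real.log p| ≤ 2*v/(1-h) := by
  have hv1 : v < 1 := lt_of_le_of_lt hvh hh
  have hh0 : (0:ℝ) < 1 - h := by linarith
  have hv0 : (0:ℝ) < 1 - v := by linarith
  have hp : 0 < p := lt_of_lt_of_le (by nlinarith) h1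
  rw [abs_le]
  constructor
  · have l1 : Real.log ((1-v)^2) ≤ Real.log p := Real.log_le_log (by positivity) h1
    rw [Real.log_pow] at l1
    push_cast at l1
    have l2 : 1 - (1-v)⁻¹ ≤ Real.log (1-v) := Real.one_sub_inv_le_log_of_pos hv0
    have e : (1-v)⁻¹ = 1 + v/(1-v) := by field_simp; ring
    have l4 : v/(1-v) ≤ v/(1-h) := by gcongr <;> linarith
    rw [show -(2*v/(1-h)) = (-2)*(v/(1-h)) by ring]
    linarith
  · have l1 : Real.log p ≤ Real.log ((1+v)^2) := Real.log_le_log hp h2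
    rw [Real.log_pow] at l1
    push_cast at l1
    have l2 : Real.log (1+v) ≤ (1+v) - 1 := Real.log_le_sub_one_of_pos (by positivity)
    have l5 : 2*v ≤ 2*v/(1-h) := by
      rw [le_div_iff₀ hh0]; nlinarith
    nlinarith

lemma auxF_bound (L b u M h s : ℝ) (hb : 0 < b) (hu : 0 < u) (huM : u ≤ M) (huM' : u⁻¹ ≤ M)
    (hbMh : b*M ≤ h) (hh1 : h < 1) :
    |(Real.log (auxA L b u s) - Real.log (auxA L b u⁻¹ s))/2| ≤ 2*(b*M)/(1-h) := by
  have hu' : 0 < u⁻¹ := inv_pos.mpr hu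
  have hM0 : 0 < M := lt_of_lt_of_le hu' huM'
  have hv : 0 ≤ b*M := by positivity
  have k1 : b*u ≤ b*M := mul_le_mul_of_nonneg_left huM hb.le
  have k2 : b*u⁻¹ ≤ b*M := mul_le_mul_of_nonneg_left huM' hb.le
  have h1 : |Real.log (auxA L b u s)| ≤ 2*(b*M)/(1-h) := by
    apply aux_abs_log_le hv hbMh hh1
    · refine le_trans ?_ (auxA_ge L b u s (by positivity))
      nlinarith
    · refine le_trans (auxA_le L b u s (by positivity)) ?_
      nlinarith [mul_nonneg (sub_nonneg.mpr k1) (by positivity : (0:ℝ) ≤ 2 + b*M + b*u)]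
  have h2 : |Real.log (auxA L b u⁻¹ s)| ≤ 2*(b*M)/(1-h) := by
    apply aux_abs_log_le hv hbMh hh1
    · refine le_trans ?_ (auxA_ge L b u⁻¹ s (by positivity))
      nlinarith
    · refine le_trans (auxA_le L b u⁻¹ s (by positivity)) ?_
      nlinarith [mul_nonneg (sub_nonneg.mpr k2) (by positivity : (0:ℝ) ≤ 2 + b*M + b*u⁻¹)]
  calc |(Real.log (auxA L b u s) - Real.log (auxA L b u⁻¹ s))/2|
      = |Real.log (auxA L b u s) - Real.log (auxA L b u⁻¹ s)|/2 := by
        rw [abs_div]; norm_num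
    _ ≤ (|Real.log (auxA L b u s)| + |Real.log (auxA L b u⁻¹ s)|)/2 := by
        gcongr
        exact abs_sub _ _
    _ ≤ 2*(b*M)/(1-h) := by linarith

lemma auxD_bound (L b u M h s : ℝ) (hL : 0 < L) (hb : 0 < b) (hb1 : b ≤ 1)
    (hu : 0 < u) (huM : u ≤ M) (huM' : u⁻¹ ≤ M)
    (hbuh : b*u ≤ h) (hbu'h : b*u⁻¹ ≤ h) (hh1 : h < 1) :
    |auxD L b u s| ≤ b * (L*M/(1-h)^4) := by
  have hu' : 0 < u⁻¹ := inv_pos.mpr hu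
  have hh0 : 0 < h := lt_of_lt_of_le (by positivity) hbuh
  have hA1 : (1-h)^2 ≤ auxA L b u s := by
    refine le_trans ?_ (auxA_ge L b u s (by positivity))
    nlinarith
  have hA2 : (1-h)^2 ≤ auxA L b u⁻¹ s := by
    refine le_trans ?_ (auxA_ge L b u⁻¹ s (by positivity))
    nlinarith
  have hA1p : 0 < auxA L b u s := lt_of_lt_of_le (by nlinarith) hA1
  have hA2p : 0 < auxA L b u⁻¹ s := lt_of_lt_of_le (by nlinarith) hA2
  have hM0 : 0 < M := lt_of_lt_of_le hu' huM'
  rw [auxD, abs_mul, abs_neg, abs_div]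
  have e1 : |b*L*Real.sin (L*s)| ≤ b*L := by
    rw [abs_mul, abs_of_pos (by positivity : (0:ℝ) < b*L)]
    exact mul_le_of_le_one_right (by positivity) (Real.abs_sin_le_one (L*s))
  have e2 : |(u - u⁻¹)*(1 - b^2)| ≤ M*1 := by
    rw [abs_mul]
    apply mul_le_mul ?_ ?_ (abs_nonneg _) hM0.le
    · rw [abs_le]; constructor <;> linarith
    · rw [abs_le]; constructor <;> nlinarith
  have e4 : |auxA L b u s * auxA L b u⁻¹ s| = auxA L b u s * auxA L b u⁻¹ s :=
    abs_of_pos (by positivity)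
  rw [e4]
  have e5 : (1-h)^4 ≤ auxA L b u s * auxA L b u⁻¹ s := by
    calc (1-h)^4 = (1-h)^2 * (1-h)^2 := by ring
      _ ≤ auxA L b u s * auxA L b u⁻¹ s :=
          mul_le_mul hA1 hA2 (by positivity) hA1p.le
  calc |b*L*Real.sin (L*s)| * (|(u - u⁻¹)*(1 - b^2)| / (auxA L b u s * auxA L b u⁻¹ s))
      ≤ (b*L) * (M*1 / (1-h)^4) := by
        apply mul_le_mul e1 ?_ (by positivity) (by positivity)
        exact div_le_div₀ (by nlinarith) e2 (pow_pos (by linarith) 4) e5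
    _ = b * (L*M/(1-h)^4) := by ring

lemma auxD_nonpos (L b u s : ℝ) (hL : 0 ≤ L) (hb : 0 < b) (hb1 : b ≤ 1) (hu : 0 < u)
    (hbu : b*u < 1) (hbu' : b*u⁻¹ < 1)
    (hsgn : 0 ≤ Real.sin (L*s) * (u - u⁻¹)) : auxD L b u s ≤ 0 := by
  have hu' : 0 < u⁻¹ := inv_pos.mpr hu
  have hA1p : 0 < auxA L b u s := auxA_pos _ _ _ _ (by positivity) hbu
  have hA2p : 0 < auxA L b u⁻¹ s := auxA_pos _ _ _ _ (by positivity) hbu'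
  have : auxD L b u s = -((b*L*(1-b^2)/(auxA L b u s * auxA L b u⁻¹ s)) *
      (Real.sin (L*s) * (u - u⁻¹))) := by
    simp only [auxD]; ring
  rw [this, neg_nonpos]
  apply mul_nonneg ?_ hsgn
  have hb2 : 0 ≤ 1 - b^2 := by nlinarith
  positivity

lemma auxD_nonneg (L b u s : ℝ) (hL : 0 ≤ L) (hb : 0 < b) (hb1 : b ≤ 1) (hu : 0 < u)
    (hbu : b*u < 1) (hbu' : b*u⁻¹ < 1)
    (hsgn : Real.sin (L*s) * (u - u⁻¹) ≤ 0) : 0 ≤ auxD L b u s := by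
  have hu' : 0 < u⁻¹ := inv_pos.mpr hu
  have hA1p : 0 < auxA L b u s := auxA_pos _ _ _ _ (by positivity) hbu
  have hA2p : 0 < auxA L b u⁻¹ s := auxA_pos _ _ _ _ (by positivity) hbu'
  have : auxD L b u s = -((b*L*(1-b^2)/(auxA L b u s * auxA L b u⁻¹ s)) *
      (Real.sin (L*s) * (u - u⁻¹))) := by
    simp only [auxD]; ring
  rw [this, neg_nonneg]
  apply mul_nonpos_of_nonneg_of_nonpos ?_ hsgn
  have hb2 : 0 ≤ 1 - b^2 := by nlinarith
  positivity

lemma norm_log_aux {w : ℂ} {h : ℝ} (hw : ‖w‖ ≤ h) (hh : h < 1) :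
    ‖Complex.log (1 + w)‖ ≤ 2*‖w‖/(1-h) := by
  have h0 : (0:ℝ) ≤ ‖w‖ := norm_nonneg w
  have hw1 : ‖w‖ < 1 := lt_of_le_of_lt hw hh
  have hb := Complex.norm_log_one_add_le hw1
  have hh0 : (0:ℝ) < 1 - h := by linarith
  have hinv : (1-‖w‖)⁻¹ ≤ (1-h)⁻¹ := by gcongr <;> linarith
  have hinv1 : (1:ℝ) ≤ (1-h)⁻¹ := by
    rw [le_inv_comm₀] <;> linarith
  calc ‖Complex.log (1+w)‖ ≤ ‖w‖^2*(1-‖w‖)⁻¹/2 + ‖w‖ := hb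
    _ ≤ ‖w‖*(1-h)⁻¹/2 + ‖w‖*(1-h)⁻¹ := by
        have t1 : ‖w‖^2*(1-‖w‖)⁻¹ ≤ ‖w‖*(1-h)⁻¹ := by
          have : ‖w‖^2 ≤ ‖w‖ := by nlinarith
          have hip : (0:ℝ) < (1-‖w‖)⁻¹ := inv_pos.mpr (by linarith)
          nlinarith
        have t2 : ‖w‖ ≤ ‖w‖*(1-h)⁻¹ := by nlinarith
        linarith
    _ ≤ 2*‖w‖/(1-h) := by
        rw [show (2:ℝ)*‖w‖/(1-h) = 2*(‖w‖*(1-h)⁻¹) by ring]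
        have hX : 0 ≤ ‖w‖*(1-h)⁻¹ := by positivity
        nlinarith

lemma relog (b : ℝ) (z : ℂ) (hb : 0 < b) (h1 : b * Real.exp z.re < 1) :
    (Complex.log (1 + (b:ℂ) * Complex.exp z)).re
      = Real.log (1 + 2*(b*Real.exp z.re)*Real.cos z.im + (b*Real.exp z.re)^2) / 2 := by
  rw [Complex.log_re, Complex.norm_def, Real.log_sqrt (Complex.normSq_nonneg _)]
  congr 1
  rw [Complex.normSq_apply]
  simp only [Complex.add_re, Complex.add_im, Complex.mul_re, Complex.mul_im,
    Complex.exp_re, Complex.exp_im, Complex.one_re, Complex.one_im,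
    Complex.ofReal_re, Complex.ofReal_im]
  have hs := Real.sin_sq_add_cos_sq z.im
  ring_nf
  congr 1
  linear_combination (b^2 * Real.exp z.re^2) * hs

lemma master (L A R β : ℝ) (S : ℂ → ℂ) (hL : 0 < L) (hA : 0 < A) (hR : 0 < R) (hR1 : R < 1)
    (hM : A * Real.exp (L*|β|) < 1)
    (hS : ∀ z : ℂ, S z = ∑' j : ℕ,
      (Complex.log (1 + (A : ℂ) * (R : ℂ) ^ j * Complex.exp z)
        - Complex.log (1 + (A : ℂ) * (R : ℂ) ^ j * Complex.exp (-z))))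
    (s : ℝ) :
    HasDerivAt (fun s' : ℝ => (S ((L:ℂ) * ((β:ℂ) + (s':ℂ)*Complex.I))).re)
      (∑' j : ℕ, auxD L (A*R^j) (Real.exp (L*β)) s) s := by
  set u : ℝ := Real.exp (L*β) with hudef
  set M : ℝ := Real.exp (L*|β|) with hMdef
  set h : ℝ := A*M with hhdef
  have hu : 0 < u := Real.exp_pos _
  have hM1 : 1 ≤ M := Real.one_le_exp (by positivity)
  have hM0 : 0 < M := lt_of_lt_of_le one_pos hM1
  have huM : u ≤ M := Real.exp_le_exp.mpr (mul_le_mul_of_nonneg_left (le_abs_self β) hL.le)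
  have huM' : u⁻¹ ≤ M := by
    rw [hudef, ← Real.exp_neg]
    exact Real.exp_le_exp.mpr (by nlinarith [neg_abs_le β])
  have hh1 : h < 1 := hM
  have hh0 : 0 < h := by positivity
  have hb : ∀ j : ℕ, 0 < A*R^j := fun j => by positivity
  have hbA : ∀ j : ℕ, A*R^j ≤ A := fun j => by
    nlinarith [pow_le_one₀ hR.le hR1.le (n := j), pow_pos hR j]
  have hb1 : ∀ j : ℕ, A*R^j ≤ 1 := fun j => by nlinarith [hbA j]
  have hbu : ∀ j : ℕ, (A*R^j)*u ≤ h := fun j => by nlinarith [hbA j]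
  have hbu' : ∀ j : ℕ, (A*R^j)*u⁻¹ ≤ h := fun j => by
    nlinarith [hbA j, inv_pos.mpr hu]
  -- the z function
  have hzre : ∀ s' : ℝ, ((L:ℂ) * ((β:ℂ) + (s':ℂ)*Complex.I)).re = L*β := by
    intro s'; simp [Complex.mul_re]
  have hzim : ∀ s' : ℝ, ((L:ℂ) * ((β:ℂ) + (s':ℂ)*Complex.I)).im = L*s' := by
    intro s'; simp [Complex.mul_im]
  -- norms of the summands' building blocks
  have hnorm : ∀ (j : ℕ) (z : ℂ), ‖(A:ℂ) * (R:ℂ)^j * Complex.exp z‖ = A*R^j*Real.exp z.re := by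
    intro j z
    simp [map_mul, map_pow, Complex.norm_real, Complex.norm_exp,
      abs_of_pos hA, abs_of_pos hR]
  -- pointwise identity
  have hpt : ∀ s' : ℝ, (S ((L:ℂ) * ((β:ℂ) + (s':ℂ)*Complex.I))).re
      = ∑' j : ℕ, (Real.log (auxA L (A*R^j) u s') - Real.log (auxA L (A*R^j) u⁻¹ s'))/2 := by
    intro s'
    set z : ℂ := (L:ℂ) * ((β:ℂ) + (s':ℂ)*Complex.I) with hzdef
    have hsummable : Summable (fun j : ℕ =>
        (Complex.log (1 + (A : ℂ) * (R : ℂ) ^ j * Complex.exp z)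
          - Complex.log (1 + (A : ℂ) * (R : ℂ) ^ j * Complex.exp (-z)))) := by
      apply Summable.of_norm_bounded (g := fun j => (4*A*M/(1-h)) * R^j)
      · exact (summable_geometric_of_lt_one hR.le hR1).mul_left _
      · intro j
        have n1 : ‖(A:ℂ) * (R:ℂ)^j * Complex.exp z‖ = A*R^j*u := by
          rw [hnorm j z, hzre s']
        have n2 : ‖(A:ℂ) * (R:ℂ)^j * Complex.exp (-z)‖ = A*R^j*u⁻¹ := by
          rw [hnorm j (-z), Complex.neg_re, hzre s', Real.exp_neg]
        have b1 : ‖Complex.log (1 + (A:ℂ) * (R:ℂ)^j * Complex.exp z)‖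
            ≤ 2*(A*R^j*u)/(1-h) := by
          have := norm_log_aux (w := (A:ℂ) * (R:ℂ)^j * Complex.exp z)
            (h := h) (by rw [n1]; exact hbu j) hh1
          rwa [n1] at this
        have b2 : ‖Complex.log (1 + (A:ℂ) * (R:ℂ)^j * Complex.exp (-z))‖
            ≤ 2*(A*R^j*u⁻¹)/(1-h) := by
          have := norm_log_aux (w := (A:ℂ) * (R:ℂ)^j * Complex.exp (-z))
            (h := h) (by rw [n2]; exact hbu' j) hh1
          rwa [n2] at this
        calc ‖Complex.log (1 + (A:ℂ) * (R:ℂ)^j * Complex.exp z)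
              - Complex.log (1 + (A:ℂ) * (R:ℂ)^j * Complex.exp (-z))‖
            ≤ ‖Complex.log (1 + (A:ℂ) * (R:ℂ)^j * Complex.exp z)‖
              + ‖Complex.log (1 + (A:ℂ) * (R:ℂ)^j * Complex.exp (-z))‖ := norm_sub_le _ _
          _ ≤ 2*(A*R^j*u)/(1-h) + 2*(A*R^j*u⁻¹)/(1-h) := add_le_add b1 b2
          _ ≤ (4*A*M/(1-h)) * R^j := by
              rw [← add_div, div_le_iff₀ (by linarith : (0:ℝ) < 1-h)]
              rw [show (4*A*M/(1-h)) * R^j * (1-h) = 4*A*M*R^j * ((1-h)/(1-h)) by ring,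
                div_self (by linarith : (1-h:ℝ) ≠ 0)]
              have k1 : 2*(A*R^j)*u ≤ 2*(A*R^j)*M :=
                mul_le_mul_of_nonneg_left huM (by positivity)
              have k2 : 2*(A*R^j)*u⁻¹ ≤ 2*(A*R^j)*M :=
                mul_le_mul_of_nonneg_left huM' (by positivity)
              nlinarith [k1, k2]
    rw [hS z, Complex.re_tsum hsummable]
    apply tsum_congr
    intro j
    rw [Complex.sub_re]
    have hcast : (A : ℂ) * (R : ℂ)^j = ((A*R^j : ℝ) : ℂ) := by push_cast; ring
    rw [hcast]
    rw [relog (A*R^j) z (hb j) (by rw [hzre s']; exact lt_of_le_of_lt (hbu j) hh1),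
      relog (A*R^j) (-z) (hb j)
        (by rw [Complex.neg_re, hzre s', Real.exp_neg]; exact lt_of_le_of_lt (hbu' j) hh1)]
    rw [Complex.neg_re, Complex.neg_im, hzre s', hzim s', Real.exp_neg, Real.cos_neg]
    simp only [auxA]
    ring
  have hfun : (fun s' : ℝ => (S ((L:ℂ) * ((β:ℂ) + (s':ℂ)*Complex.I))).re)
      = (fun s' : ℝ => ∑' j : ℕ, (Real.log (auxA L (A*R^j) u s')
          - Real.log (auxA L (A*R^j) u⁻¹ s'))/2) := funext hpt
  rw [hfun]
  exact hasDerivAt_tsum (u := fun j => (A*(L*M/(1-h)^4))*R^j) (y₀ := 0)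
    ((summable_geometric_of_lt_one hR.le hR1).mul_left _)
    (fun j y => auxF_hasDeriv L (A*R^j) u y (hb j) hu
      (lt_of_le_of_lt (hbu j) hh1) (lt_of_le_of_lt (hbu' j) hh1))
    (fun j y => by
      rw [Real.norm_eq_abs]
      refine le_trans (auxD_bound L (A*R^j) u M h y hL (hb j) (hb1 j) hu huM huM'
        (hbu j) (hbu' j) hh1) (le_of_eq (by ring)))
    (by
      apply Summable.of_norm_bounded (g := fun j => (2*M/(1-h))*(A*R^j))
      · have : Summable (fun j : ℕ => (2*M/(1-h))*A*R^j) :=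
          (summable_geometric_of_lt_one hR.le hR1).mul_left _
        refine this.congr (fun j => by ring)
      · intro j
        rw [Real.norm_eq_abs]
        refine le_trans (auxF_bound L (A*R^j) u M h 0 (hb j) hu huM huM'
          (by nlinarith [hbA j]) hh1) (le_of_eq (by ring)))
    s

theorem stmt_11 (δ r a Δ' t β : ℝ)
    (hδ : δ ∈ Set.Ioo (0:ℝ) 1) (hr : r ∈ Set.Ioo (0:ℝ) 1)
    (ha : a ∈ Set.Ioc (0:ℝ) (1 - δ)) (hΔpos : 0 < Δ')
    (hΔ : (1 - δ) * Real.exp Δ' < 1)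
    (ht : t ∈ Set.Ioo (0:ℝ) 1)
    (hβ : |β| * (-Real.log t) < Δ')
    (S : ℂ → ℂ)
    (hS : ∀ z : ℂ, S z = ∑' j : ℕ,
      (Complex.log (1 + (a : ℂ) * (r : ℂ) ^ j * Complex.exp z)
        - Complex.log (1 + (a : ℂ) * (r : ℂ) ^ j * Complex.exp (-z)))) :
    (0 ≤ β →
      (∀ s ∈ Set.Icc (0:ℝ) (Real.pi * (-Real.log t)⁻¹),
        deriv (fun s' : ℝ =>
          (S (((-Real.log t : ℝ) : ℂ) * ((β : ℂ) + (s' : ℂ) * Complex.I))).re) s ≤ 0) ∧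
      (∀ s ∈ Set.Icc (-(Real.pi * (-Real.log t)⁻¹)) (0:ℝ),
        0 ≤ deriv (fun s' : ℝ =>
          (S (((-Real.log t : ℝ) : ℂ) * ((β : ℂ) + (s' : ℂ) * Complex.I))).re) s)) ∧
    (β ≤ 0 →
      (∀ s ∈ Set.Icc (0:ℝ) (Real.pi * (-Real.log t)⁻¹),
        0 ≤ deriv (fun s' : ℝ =>
          (S (((-Real.log t : ℝ) : ℂ) * ((β : ℂ) + (s' : ℂ) * Complex.I))).re) s) ∧
      (∀ s ∈ Set.Icc (-(Real.pi * (-Real.log t)⁻¹)) (0:ℝ),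
        deriv (fun s' : ℝ =>
          (S (((-Real.log t : ℝ) : ℂ) * ((β : ℂ) + (s' : ℂ) * Complex.I))).re) s ≤ 0)) := by
  obtain ⟨ht0, ht1⟩ := ht
  obtain ⟨hδ0, hδ1⟩ := hδ
  obtain ⟨hr0, hr1⟩ := hr
  obtain ⟨ha0, ha1⟩ := ha
  have hL : 0 < -Real.log t := by
    have := Real.log_neg ht0 ht1; linarith
  set L : ℝ := -Real.log t with hLdef
  have hexp : Real.exp (L*|β|) < Real.exp Δ' := by
    apply Real.exp_lt_exp.mpr; rw [mul_comm]; exact hβ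
  have hM : a * Real.exp (L*|β|) < 1 := by
    nlinarith [Real.exp_pos (L*|β|), Real.exp_pos Δ',
      mul_lt_mul_of_pos_left hexp (by linarith : (0:ℝ) < 1-δ)]
  set u : ℝ := Real.exp (L*β) with hudef
  set M : ℝ := Real.exp (L*|β|) with hMdef
  have hu : 0 < u := Real.exp_pos _
  have hu' : 0 < u⁻¹ := inv_pos.mpr hu
  have hM1 : 1 ≤ M := Real.one_le_exp (by positivity)
  have huM : u ≤ M := Real.exp_le_exp.mpr (mul_le_mul_of_nonneg_left (le_abs_self β) hL.le)
  have huM' : u⁻¹ ≤ M := by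
    rw [hudef, ← Real.exp_neg]
    exact Real.exp_le_exp.mpr (by nlinarith [neg_abs_le β])
  have hbj : ∀ j : ℕ, 0 < a*r^j := fun j => by positivity
  have hbA : ∀ j : ℕ, a*r^j ≤ a := fun j => by
    nlinarith [pow_le_one₀ hr0.le hr1.le (n := j), pow_pos hr0 j]
  have hb1 : ∀ j : ℕ, a*r^j ≤ 1 := fun j => by nlinarith [hbA j]
  have hbu : ∀ j : ℕ, (a*r^j)*u < 1 := fun j => by
    nlinarith [hbA j, mul_le_mul_of_nonneg_left huM (hbj j).le,
      mul_le_mul_of_nonneg_right (hbA j) hu.le]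
  have hbu' : ∀ j : ℕ, (a*r^j)*u⁻¹ < 1 := fun j => by
    nlinarith [hbA j, mul_le_mul_of_nonneg_left huM' (hbj j).le,
      mul_le_mul_of_nonneg_right (hbA j) hu'.le]
  have key : ∀ s : ℝ, deriv (fun s' : ℝ =>
      (S ((L : ℂ) * ((β : ℂ) + (s' : ℂ) * Complex.I))).re) s
      = ∑' j : ℕ, auxD L (a*r^j) u s :=
    fun s => (master L a r β S hL ha0 hr0 hr1 hM hS s).deriv
  have hsin1 : ∀ s ∈ Set.Icc (0:ℝ) (Real.pi * L⁻¹), 0 ≤ Real.sin (L*s) := by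
    rintro s ⟨hs0, hs1⟩
    apply Real.sin_nonneg_of_nonneg_of_le_pi (by positivity)
    calc L*s ≤ L*(Real.pi * L⁻¹) := mul_le_mul_of_nonneg_left hs1 hL.le
      _ = Real.pi := by field_simp
  have hsin2 : ∀ s ∈ Set.Icc (-(Real.pi * L⁻¹)) (0:ℝ), Real.sin (L*s) ≤ 0 := by
    rintro s ⟨hs0, hs1⟩
    apply Real.sin_nonpos_of_nonpos_of_neg_pi_le
    · exact mul_nonpos_of_nonneg_of_nonpos hL.le hs1
    · calc -Real.pi = L*(-(Real.pi * L⁻¹)) := by field_simp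
        _ ≤ L*s := mul_le_mul_of_nonneg_left hs0 hL.le
  constructor
  · intro hβ0
    have huu : 0 ≤ u - u⁻¹ := by
      have h1 : 1 ≤ u := Real.one_le_exp (by positivity)
      nlinarith [mul_inv_cancel₀ hu.ne']
    constructor
    · intro s hs
      rw [key s]
      apply tsum_nonpos
      intro j
      exact auxD_nonpos L (a*r^j) u s hL.le (hbj j) (hb1 j) hu (hbu j) (hbu' j)
        (mul_nonneg (hsin1 s hs) huu)
    · intro s hs
      rw [key s]
      apply tsum_nonneg
      intro j
      exact auxD_nonneg L (a*r^j) u s hL.le (hbj j) (hb1 j) hu (hbu j) (hbu' j)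
        (mul_nonpos_of_nonpos_of_nonneg (hsin2 s hs) huu)
  · intro hβ0
    have huu : u - u⁻¹ ≤ 0 := by
      have h1 : u ≤ 1 := Real.exp_le_one_iff.mpr (mul_nonpos_of_nonneg_of_nonpos hL.le hβ0)
      nlinarith [mul_inv_cancel₀ hu.ne']
    constructor
    · intro s hs
      rw [key s]
      apply tsum_nonneg
      intro j
      exact auxD_nonneg L (a*r^j) u s hL.le (hbj j) (hb1 j) hu (hbu j) (hbu' j)
        (mul_nonpos_of_nonneg_of_nonpos (hsin1 s hs) huu)
    · intro s hs
      rw [key s]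
      apply tsum_nonpos
      intro j
      exact auxD_nonpos L (a*r^j) u s hL.le (hbj j) (hb1 j) hu (hbu j) (hbu' j)
        (by nlinarith [hsin2 s hs, huu])
end

section
/- Fix t ∈ (0,1). Then lim_{r → 1⁻} (1−r)³ ∑_{k=1}^∞ (1 − t^k) · r^k(1 + r^k)/(1 − r^k)³ = 2ζ(3) − 2 Li₃(t), where ζ(3) = ∑_{n≥1} n^{−3} and Li₃(t) = ∑_{k≥1} t^k/k³. -/
open Filter

private lemma cube_le_exp {u : ℝ} (hu : 0 ≤ u) : u ^ 3 ≤ 27 * Real.exp u := by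
  have h1 : u / 3 ≤ Real.exp (u / 3) := by
    have := Real.add_one_le_exp (u / 3); linarith
  have h2 : (u / 3) ^ 3 ≤ Real.exp (u / 3) ^ 3 :=
    pow_le_pow_left₀ (by positivity) h1 3
  have h3 : Real.exp (u / 3) ^ 3 = Real.exp u := by
    rw [show Real.exp (u / 3) ^ 3 = Real.exp (u / 3) * Real.exp (u / 3) * Real.exp (u / 3) by ring,
      ← Real.exp_add, ← Real.exp_add]
    congr 1; ring
  nlinarith [h2, h3]

set_option maxHeartbeats 1000000 in
theorem stmt_16 (t : ℝ) (ht : t ∈ Set.Ioo (0:ℝ) 1) :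
    Tendsto (fun r : ℝ => (1 - r) ^ 3 *
        ∑' k : ℕ, (1 - t ^ (k + 1)) *
          (r ^ (k + 1) * (1 + r ^ (k + 1)) / (1 - r ^ (k + 1)) ^ 3))
      (nhdsWithin 1 (Set.Ioo (0:ℝ) 1))
      (nhds (2 * (∑' n : ℕ, 1 / ((n + 1 : ℝ)) ^ 3)
        - 2 * ∑' k : ℕ, t ^ (k + 1) / ((k + 1 : ℝ)) ^ 3)) := by
  obtain ⟨ht0, ht1⟩ := ht
  -- summability facts
  have hsum3 : Summable (fun n : ℕ => 1 / ((n + 1 : ℝ)) ^ 3) := by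
    have h := (Real.summable_one_div_nat_pow (p := 3)).2 (by norm_num)
    have := (summable_nat_add_iff (f := fun n : ℕ => 1 / (n : ℝ) ^ 3) 1).2 h
    simpa using this
  have hsumt : Summable (fun k : ℕ => t ^ (k + 1) / ((k + 1 : ℝ)) ^ 3) := by
    apply Summable.of_nonneg_of_le (fun k => by positivity)
      (fun k => ?_) hsum3
    rw [div_le_div_iff₀ (by positivity) (by positivity)]
    have : t ^ (k + 1) ≤ 1 := pow_le_one₀ ht0.le ht1.le
    nlinarith [pow_pos (show (0:ℝ) < (k:ℝ)+1 by positivity) 3]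
  -- rewrite the target as a single tsum
  have htarget : (2 * (∑' n : ℕ, 1 / ((n + 1 : ℝ)) ^ 3)
        - 2 * ∑' k : ℕ, t ^ (k + 1) / ((k + 1 : ℝ)) ^ 3)
      = ∑' k : ℕ, (1 - t ^ (k + 1)) * (2 / ((k + 1 : ℝ)) ^ 3) := by
    rw [← tsum_mul_left, ← tsum_mul_left, ← Summable.tsum_sub (hsum3.mul_left 2) (hsumt.mul_left 2)]
    congr 1; funext k; ring
  rw [htarget]
  -- rewrite the function as a tsum
  have hfun : (fun r : ℝ => (1 - r) ^ 3 *
        ∑' k : ℕ, (1 - t ^ (k + 1)) *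
          (r ^ (k + 1) * (1 + r ^ (k + 1)) / (1 - r ^ (k + 1)) ^ 3))
      = fun r : ℝ => ∑' k : ℕ, (1 - r) ^ 3 * ((1 - t ^ (k + 1)) *
          (r ^ (k + 1) * (1 + r ^ (k + 1)) / (1 - r ^ (k + 1)) ^ 3)) := by
    funext r; rw [tsum_mul_left]
  rw [hfun]
  -- apply dominated convergence (Tannery)
  apply tendsto_tsum_of_dominated_convergence
    (bound := fun k : ℕ => 432 / ((k + 1 : ℝ)) ^ 3)
  · exact hsum3.mul_left 432 |>.congr (fun k => by ring)
  · -- pointwise limits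
    intro k
    set m := k + 1 with hm
    have hM : (0:ℝ) < (k + 1 : ℝ) := by positivity
    -- the "nice" function
    set S : ℝ → ℝ := fun r => ∑ i ∈ Finset.range m, r ^ i with hS
    have hS1 : S 1 = (k + 1 : ℝ) := by simp [hS]; push_cast [hm]; ring
    have hcont : ContinuousAt
        (fun r : ℝ => (1 - t ^ m) * (r ^ m * (1 + r ^ m) / (S r) ^ 3)) 1 := by
      apply ContinuousAt.mul continuousAt_const
      apply ContinuousAt.div
      · fun_prop
      · fun_prop
      · rw [hS1]; positivity
    have hval : (1 - t ^ m) * ((1:ℝ) ^ m * (1 + (1:ℝ) ^ m) / (S 1) ^ 3)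
        = (1 - t ^ m) * (2 / ((k + 1 : ℝ)) ^ 3) := by
      rw [hS1]; ring
    have htend : Tendsto (fun r : ℝ => (1 - t ^ m) * (r ^ m * (1 + r ^ m) / (S r) ^ 3))
        (nhdsWithin 1 (Set.Ioo (0:ℝ) 1)) (nhds ((1 - t ^ m) * (2 / ((k + 1 : ℝ)) ^ 3))) := by
      rw [← hval]
      exact (hcont.tendsto).mono_left nhdsWithin_le_nhds
    apply htend.congr'
    filter_upwards [self_mem_nhdsWithin] with r hr
    obtain ⟨hr0, hr1⟩ := hr
    have hfac : 1 - r ^ m = (1 - r) * S r := by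
      simp only [hS]
      linear_combination geom_sum_mul r m
    have hSpos : 0 < S r := by
      have : (0:ℝ) < r ^ 0 := by norm_num
      apply Finset.sum_pos (fun i _ => pow_pos hr0 i)
      exact ⟨0, Finset.mem_range.2 (Nat.succ_pos k)⟩
    have h1r : (0:ℝ) < 1 - r := by linarith
    rw [hfac]
    field_simp
  · -- the uniform bound
    filter_upwards [self_mem_nhdsWithin] with r hr k
    obtain ⟨hr0, hr1⟩ := hr
    clear htarget hfun hsum3 hsumt
    set m := k + 1 with hm
    have hM : (0:ℝ) < (k + 1 : ℝ) := by positivity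
    have hrm0 : 0 < r ^ m := pow_pos hr0 m
    have hrm1 : r ^ m < 1 := pow_lt_one₀ hr0.le hr1 (Nat.succ_ne_zero k)
    have htm0 : 0 < t ^ m := pow_pos ht0 m
    have htm1 : t ^ m < 1 := pow_lt_one₀ ht0.le ht1 (Nat.succ_ne_zero k)
    have h1r : (0:ℝ) < 1 - r := by linarith
    have h1rm : (0:ℝ) < 1 - r ^ m := by linarith
    have hnonneg : 0 ≤ (1 - r) ^ 3 * ((1 - t ^ m) *
        (r ^ m * (1 + r ^ m) / (1 - r ^ m) ^ 3)) := by
      apply mul_nonneg (by positivity)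
      apply mul_nonneg (by linarith) (by positivity)
    rw [Real.norm_eq_abs, abs_of_nonneg hnonneg]
    rw [show (1 - r) ^ 3 * ((1 - t ^ m) * (r ^ m * (1 + r ^ m) / (1 - r ^ m) ^ 3))
        = ((1 - t ^ m) * (r ^ m * (1 + r ^ m)) * (1 - r) ^ 3) / (1 - r ^ m) ^ 3 from by ring,
      div_le_div_iff₀ (by positivity) (by positivity)]
    -- goal: (1-t^m)*(r^m*(1+r^m)) * (1-r)^3 * (k+1)^3 ≤ 432 * (1-r^m)^3
    rcases le_or_gt (r ^ m) (1/2 : ℝ) with hcase | hcase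
    · -- small r^m : use m^3 (1-r)^3 r^m ≤ 27
      have hkey : ((k + 1 : ℝ)) ^ 3 * (1 - r) ^ 3 * r ^ m ≤ 27 := by
        have hexp : r ≤ Real.exp (r - 1) := by
          have := Real.add_one_le_exp (r - 1); linarith
        have hrmexp : r ^ m ≤ Real.exp ((m : ℝ) * (r - 1)) := by
          calc r ^ m ≤ Real.exp (r - 1) ^ m := pow_le_pow_left₀ hr0.le hexp m
            _ = Real.exp ((m : ℝ) * (r - 1)) := (Real.exp_nat_mul _ m).symm
        set u : ℝ := (m : ℝ) * (1 - r) with hu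
        have hu0 : 0 ≤ u := by positivity
        have h27 : u ^ 3 ≤ 27 * Real.exp u := cube_le_exp hu0
        have hexpneg : Real.exp ((m : ℝ) * (r - 1)) = (Real.exp u)⁻¹ := by
          rw [← Real.exp_neg]; congr 1; ring
        have hexppos : 0 < Real.exp u := Real.exp_pos u
        have hmc : ((k + 1 : ℝ)) ^ 3 * (1 - r) ^ 3 = u ^ 3 := by
          rw [hu]; push_cast [hm]; ring
        rw [hmc]
        calc u ^ 3 * r ^ m ≤ u ^ 3 * (Real.exp u)⁻¹ := by
              apply mul_le_mul_of_nonneg_left _ (by positivity)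
              rw [← hexpneg]; exact hrmexp
          _ ≤ 27 := by
              rw [mul_inv_le_iff₀ hexppos]; linarith
      have h1rm2 : (1/2 : ℝ) ≤ 1 - r ^ m := by linarith
      have hc : (1/2 : ℝ) ^ 3 ≤ (1 - r ^ m) ^ 3 := pow_le_pow_left₀ (by norm_num) h1rm2 3
      have h2 : (1 - t ^ m) * (1 + r ^ m) ≤ 2 := by nlinarith
      have ha0 : (0:ℝ) ≤ ((k:ℝ) + 1) ^ 3 * (1 - r) ^ 3 * r ^ m := by positivity
      calc (1 - t ^ m) * (r ^ m * (1 + r ^ m)) * (1 - r) ^ 3 * ((k:ℝ) + 1) ^ 3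
          = ((1 - t ^ m) * (1 + r ^ m)) * (((k:ℝ) + 1) ^ 3 * (1 - r) ^ 3 * r ^ m) := by ring
        _ ≤ 2 * 27 := mul_le_mul h2 hkey ha0 (by norm_num)
        _ ≤ 432 * (1 - r ^ m) ^ 3 := by nlinarith [hc]
    · -- large r^m : 1 - r^m ≥ (1-r) * m * r^m ≥ (1-r) * m / 2
      have hgeom : (1 - r) * ((k + 1 : ℝ) * r ^ m) ≤ 1 - r ^ m := by
        have hfac : 1 - r ^ m = (1 - r) * ∑ i ∈ Finset.range m, r ^ i := by
          linear_combination geom_sum_mul r m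
        rw [hfac]
        apply mul_le_mul_of_nonneg_left _ h1r.le
        have : ∀ i ∈ Finset.range m, r ^ m ≤ r ^ i := fun i hi =>
          pow_le_pow_of_le_one hr0.le hr1.le (Finset.mem_range.1 hi).le
        calc (k + 1 : ℝ) * r ^ m = ∑ _i ∈ Finset.range m, r ^ m := by
              simp [hm, mul_comm]
          _ ≤ ∑ i ∈ Finset.range m, r ^ i := Finset.sum_le_sum this
      have hlow : (1 - r) * ((k + 1 : ℝ) / 2) ≤ 1 - r ^ m := by
        calc (1 - r) * ((k + 1 : ℝ) / 2) ≤ (1 - r) * ((k + 1 : ℝ) * r ^ m) := by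
              apply mul_le_mul_of_nonneg_left _ h1r.le
              nlinarith
          _ ≤ 1 - r ^ m := hgeom
      have hcube : ((1 - r) * ((k + 1 : ℝ) / 2)) ^ 3 ≤ (1 - r ^ m) ^ 3 :=
        pow_le_pow_left₀ (by positivity) hlow 3
      have hcube' : (1 - r) ^ 3 * ((k:ℝ) + 1) ^ 3 / 8 ≤ (1 - r ^ m) ^ 3 :=
        calc (1 - r) ^ 3 * ((k:ℝ) + 1) ^ 3 / 8 = ((1 - r) * (((k:ℝ) + 1) / 2)) ^ 3 := by ring
          _ ≤ (1 - r ^ m) ^ 3 := hcube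
      have h2 : (1 - t ^ m) * (r ^ m * (1 + r ^ m)) ≤ 2 := by
        have hx : r ^ m * (1 + r ^ m) ≤ 2 := by nlinarith
        nlinarith [hx, mul_nonneg htm0.le (mul_nonneg hrm0.le (by linarith : (0:ℝ) ≤ 1 + r ^ m))]
      have hb : (0:ℝ) ≤ (1 - r) ^ 3 * ((k:ℝ) + 1) ^ 3 := by positivity
      calc (1 - t ^ m) * (r ^ m * (1 + r ^ m)) * (1 - r) ^ 3 * ((k:ℝ) + 1) ^ 3
          = ((1 - t ^ m) * (r ^ m * (1 + r ^ m))) * ((1 - r) ^ 3 * ((k:ℝ) + 1) ^ 3) := by ring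
        _ ≤ 2 * ((1 - r) ^ 3 * ((k:ℝ) + 1) ^ 3) := mul_le_mul_of_nonneg_right h2 hb
        _ ≤ 432 * (1 - r ^ m) ^ 3 := by linarith [hcube', hb]
end

section
/- For r ∈ (0,1) and integers k ≥ 1, one has 0 ≤ (1−r)/(1−r^k) − 1/k = (1−r) · (r^{k−2} + 2r^{k−3} + ⋯ + (k−1))/(k(1 + r + ⋯ + r^{k−1})) ≤ (k/2)(1−r). Consequently, for a ∈ (0,1), |∑_{k=1}^∞ (−1)^{k+1} a^k [ (1−r)/(1−r^k) − 1/k ]| ≤ (1−r) ∑_{k=1}^∞ (k/2) a^k ≤ (1−r)/(1−a)³. -/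
private lemma gauss_nat (n : ℕ) : 2 * ∑ i ∈ Finset.range n, (n - i) = n * (n + 1) := by
  induction n with
  | zero => simp
  | succ m ih =>
    have h : ∑ i ∈ Finset.range (m + 1), (m + 1 - i)
        = (∑ i ∈ Finset.range m, (m - i)) + (m + 1) := by
      rw [Finset.sum_range_succ']
      simp [Nat.succ_sub_succ]
    rw [h, Nat.mul_add, ih]; ring

private lemma key_id (r : ℝ) (k : ℕ) :
    (k : ℝ) - ∑ i ∈ Finset.range k, r ^ i
      = (1 - r) * ∑ i ∈ Finset.range k, ((k - 1 - i : ℕ) : ℝ) * r ^ i := by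
  induction k with
  | zero => simp
  | succ n ih =>
    have hgs : (1 - r) * ∑ i ∈ Finset.range n, r ^ i = 1 - r ^ n := by
      have := geom_sum_mul r n
      linarith [this]
    have hstep : ∑ i ∈ Finset.range (n + 1), ((n + 1 - 1 - i : ℕ) : ℝ) * r ^ i
        = (∑ i ∈ Finset.range n, ((n - 1 - i : ℕ) : ℝ) * r ^ i)
          + ∑ i ∈ Finset.range n, r ^ i := by
      rw [Finset.sum_range_succ]
      have h0 : ((n + 1 - 1 - n : ℕ) : ℝ) = 0 := by norm_num
      rw [h0, zero_mul, add_zero, ← Finset.sum_add_distrib]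
      apply Finset.sum_congr rfl
      intro i hi
      have hi' : i < n := Finset.mem_range.mp hi
      have : (n + 1 - 1 - i : ℕ) = (n - 1 - i) + 1 := by omega
      rw [this]; push_cast; ring
    rw [hstep, Finset.sum_range_succ, mul_add, ← ih, hgs]
    push_cast; ring

theorem stmt_18 (r : ℝ) (hr : r ∈ Set.Ioo (0:ℝ) 1) :
    (∀ k : ℕ, 1 ≤ k →
      0 ≤ (1 - r) / (1 - r ^ k) - 1 / (k : ℝ) ∧
      (1 - r) / (1 - r ^ k) - 1 / (k : ℝ)
        = (1 - r) * (∑ i ∈ Finset.range (k - 1), ((k - 1 - i : ℕ) : ℝ) * r ^ i)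
            / ((k : ℝ) * ∑ i ∈ Finset.range k, r ^ i) ∧
      (1 - r) / (1 - r ^ k) - 1 / (k : ℝ) ≤ ((k : ℝ) / 2) * (1 - r)) ∧
    ∀ a : ℝ, a ∈ Set.Ioo (0:ℝ) 1 →
      |∑' k : ℕ, (-1 : ℝ) ^ k * a ^ (k + 1) *
          ((1 - r) / (1 - r ^ (k + 1)) - 1 / ((k : ℝ) + 1))|
        ≤ (1 - r) * ∑' k : ℕ, (((k : ℝ) + 1) / 2) * a ^ (k + 1) ∧
      (1 - r) * ∑' k : ℕ, (((k : ℝ) + 1) / 2) * a ^ (k + 1) ≤ (1 - r) / (1 - a) ^ 3 := by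
  obtain ⟨hr0, hr1⟩ := hr
  have hpart1 : ∀ k : ℕ, 1 ≤ k →
      0 ≤ (1 - r) / (1 - r ^ k) - 1 / (k : ℝ) ∧
      (1 - r) / (1 - r ^ k) - 1 / (k : ℝ)
        = (1 - r) * (∑ i ∈ Finset.range (k - 1), ((k - 1 - i : ℕ) : ℝ) * r ^ i)
            / ((k : ℝ) * ∑ i ∈ Finset.range k, r ^ i) ∧
      (1 - r) / (1 - r ^ k) - 1 / (k : ℝ) ≤ ((k : ℝ) / 2) * (1 - r) := by
    intro k hk
    set S : ℝ := ∑ i ∈ Finset.range k, r ^ i with hS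
    set T : ℝ := ∑ i ∈ Finset.range (k - 1), ((k - 1 - i : ℕ) : ℝ) * r ^ i with hT
    clear_value S T
    have hkR : (1 : ℝ) ≤ (k : ℝ) := by exact_mod_cast hk
    have hkpos : (0 : ℝ) < (k : ℝ) := by linarith
    have hS1 : (1 : ℝ) ≤ S := by
      have : r ^ 0 ≤ S := by
        rw [hS]
        apply Finset.single_le_sum (f := fun i => r ^ i)
        · intro i _; positivity
        · exact Finset.mem_range.mpr (by omega)
      simpa using this
    have hSpos : (0 : ℝ) < S := by linarith
    have hgs : (1 - r) * S = 1 - r ^ k := by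
      have := geom_sum_mul r k
      rw [hS]; linarith [this]
    have h1rk : (0 : ℝ) < 1 - r ^ k := by
      rw [← hgs]; exact mul_pos (by linarith) hSpos
    have hTU : T = ∑ i ∈ Finset.range k, ((k - 1 - i : ℕ) : ℝ) * r ^ i := by
      rw [hT]
      obtain ⟨m, rfl⟩ : ∃ m, k = m + 1 := ⟨k - 1, by omega⟩
      rw [Finset.sum_range_succ]
      have h0 : ((m + 1 - 1 - m : ℕ) : ℝ) = 0 := by norm_num
      rw [h0]
      simp
    have hkey : (k : ℝ) - S = (1 - r) * T := by
      rw [hTU, hS]; exact key_id r k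
    have hTnonneg : 0 ≤ T := by
      rw [hT]
      apply Finset.sum_nonneg
      intro i _; positivity
    have hrne : (1 - r) ≠ 0 := by
      intro hcon; rw [hcon, zero_mul] at hgs; linarith
    have hLHS : (1 - r) / (1 - r ^ k) = 1 / S := by
      rw [← hgs, show (1 - r) / ((1 - r) * S) = ((1 - r) * 1) / ((1 - r) * S) from by ring]
      exact mul_div_mul_left 1 S hrne
    have heq : (1 - r) / (1 - r ^ k) - 1 / (k : ℝ)
        = (1 - r) * T / ((k : ℝ) * S) := by
      rw [hLHS, ← hkey, div_sub_div _ _ hSpos.ne' hkpos.ne', one_mul, mul_one,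
        mul_comm S (k : ℝ)]
    refine ⟨?_, heq, ?_⟩
    · rw [heq]
      exact div_nonneg (mul_nonneg (by linarith) hTnonneg) (by positivity)
    · rw [heq]
      -- 2T ≤ k*k
      have hT2 : 2 * T ≤ (k : ℝ) * (k : ℝ) := by
        have hTle : T ≤ ∑ i ∈ Finset.range (k - 1), ((k - 1 - i : ℕ) : ℝ) := by
          rw [hT]
          apply Finset.sum_le_sum
          intro i _
          have h1 : r ^ i ≤ 1 := pow_le_one₀ (le_of_lt hr0) (le_of_lt hr1)
          have h2 : (0:ℝ) ≤ ((k - 1 - i : ℕ) : ℝ) := Nat.cast_nonneg _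
          nlinarith
        have hnat : 2 * ∑ i ∈ Finset.range (k - 1), (k - 1 - i) = (k - 1) * k := by
          have := gauss_nat (k - 1)
          rw [this]
          congr 1
          omega
        have hcast : (∑ i ∈ Finset.range (k - 1), ((k - 1 - i : ℕ) : ℝ))
            = ((∑ i ∈ Finset.range (k - 1), (k - 1 - i) : ℕ) : ℝ) := by
          push_cast; rfl
        have hle : ((k - 1) * k : ℕ) ≤ k * k := by
          apply Nat.mul_le_mul_right
          omega
        have hnat2 : 2 * (∑ i ∈ Finset.range (k - 1), (k - 1 - i)) ≤ k * k := by
          rw [hnat]; exact hle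
        have : 2 * (∑ i ∈ Finset.range (k - 1), ((k - 1 - i : ℕ) : ℝ)) ≤ (k:ℝ) * (k:ℝ) := by
          rw [hcast]
          exact_mod_cast hnat2
        linarith
      rw [div_le_iff₀ (by positivity : (0:ℝ) < (k : ℝ) * S)]
      have h1r : (0:ℝ) < 1 - r := by linarith
      nlinarith [mul_le_mul_of_nonneg_left hS1 (le_of_lt (mul_pos hkpos hkpos)),
        mul_nonneg (le_of_lt h1r) hTnonneg]
  refine ⟨hpart1, ?_⟩
  intro a ha
  obtain ⟨ha0, ha1⟩ := ha
  set F : ℕ → ℝ := fun k => (1 - r) / (1 - r ^ (k + 1)) - 1 / ((k : ℝ) + 1) with hF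
  have hFbounds : ∀ k : ℕ, 0 ≤ F k ∧ F k ≤ (((k : ℝ) + 1) / 2) * (1 - r) := by
    intro k
    obtain ⟨h1, _, h3⟩ := hpart1 (k + 1) (by omega)
    constructor
    · simpa [hF] using h1
    · have : ((k + 1 : ℕ) : ℝ) = (k : ℝ) + 1 := by push_cast; ring
      rw [hF]
      simp only
      rw [← this]
      convert h3 using 2 <;> push_cast <;> ring
  have hanorm : ‖a‖ < 1 := by rw [Real.norm_eq_abs, abs_of_pos ha0]; exact ha1
  have h1 : HasSum (fun n : ℕ => (n : ℝ) * a ^ n) (a / (1 - a) ^ 2) :=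
    hasSum_coe_mul_geometric_of_norm_lt_one hanorm
  have h2 : HasSum (fun n : ℕ => ((n : ℝ) + 1) * a ^ (n + 1)) (a / (1 - a) ^ 2) := by
    have h' := (hasSum_nat_add_iff (f := fun n : ℕ => (n : ℝ) * a ^ n) 1).mpr
      (by simpa using h1)
    convert h' using 2 with n
    · rfl
    push_cast; ring
  have h3 : HasSum (fun n : ℕ => (((n : ℝ) + 1) / 2) * a ^ (n + 1)) (a / (1 - a) ^ 2 / 2) := by
    have := h2.div_const 2
    convert this using 2 with n
    · rfl
    ring
  have htsumg : ∑' k : ℕ, (((k : ℝ) + 1) / 2) * a ^ (k + 1) = a / (1 - a) ^ 2 / 2 :=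
    h3.tsum_eq
  have hgsummable : Summable (fun n : ℕ => (((n : ℝ) + 1) / 2) * a ^ (n + 1)) := h3.summable
  set h : ℕ → ℝ := fun k => (-1 : ℝ) ^ k * a ^ (k + 1) * F k with hh
  have h1r : (0:ℝ) ≤ 1 - r := by linarith
  have habs : ∀ k, |h k| ≤ (1 - r) * ((((k : ℝ) + 1) / 2) * a ^ (k + 1)) := by
    intro k
    obtain ⟨hf0, hfle⟩ := hFbounds k
    have : |h k| = a ^ (k + 1) * F k := by
      rw [hh]
      simp only
      rw [abs_mul, abs_mul, abs_pow, abs_neg, abs_one, one_pow, one_mul,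
        abs_of_pos (pow_pos ha0 _), abs_of_nonneg hf0]
    rw [this]
    have hap : (0:ℝ) < a ^ (k + 1) := pow_pos ha0 _
    nlinarith [mul_le_mul_of_nonneg_left hfle (le_of_lt hap)]
  have hgsum' : Summable (fun k : ℕ => (1 - r) * ((((k : ℝ) + 1) / 2) * a ^ (k + 1))) :=
    hgsummable.mul_left _
  have habs_summable : Summable (fun k => |h k|) :=
    Summable.of_nonneg_of_le (fun k => abs_nonneg _) habs hgsum'
  have hsummable : Summable h := habs_summable.of_abs
  constructor
  · calc |∑' k, h k| ≤ ∑' k, |h k| := by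
          have := norm_tsum_le_tsum_norm (f := h)
            (by simpa [Real.norm_eq_abs] using habs_summable)
          simpa [Real.norm_eq_abs] using this
      _ ≤ ∑' k : ℕ, (1 - r) * ((((k : ℝ) + 1) / 2) * a ^ (k + 1)) :=
          Summable.tsum_le_tsum habs habs_summable hgsum'
      _ = (1 - r) * ∑' k : ℕ, (((k : ℝ) + 1) / 2) * a ^ (k + 1) := tsum_mul_left
  · rw [htsumg]
    have h1a : (0:ℝ) < 1 - a := by linarith
    have hq : a / (1 - a) ^ 2 / 2 ≤ 1 / (1 - a) ^ 3 := by
      rw [div_div, div_le_div_iff₀ (by positivity : (0:ℝ) < (1 - a) ^ 2 * 2)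
        (pow_pos h1a 3)]
      nlinarith
    calc (1 - r) * (a / (1 - a) ^ 2 / 2) ≤ (1 - r) * (1 / (1 - a) ^ 3) :=
          mul_le_mul_of_nonneg_left hq h1r
      _ = (1 - r) / (1 - a) ^ 3 := by ring
end

section
/- Let λ and μ be integer partitions with μ ⊆ λ such that λ/μ is a horizontal strip (i.e., λ_i ≥ μ_i ≥ λ_{i+1} for all i). Let S(λ) denote the multiset of positive parts of λ, and let m_i(λ) be the multiplicity of i as a part of λ. Define I = {i ≥ 1 : λ'_{i+1} = μ'_{i+1} and λ'_i > μ'_i} and J = {j ≥ 1 : λ'_{j+1} > μ'_{j+1} and λ'_j = μ'_j}, where λ' is the conjugate partition. Then, as multisets, S(λ) \ S(μ) = I and S(μ) \ S(λ) = J; in particular each element of these multiset differences has multiplicity exactly 1, i.e., m_i(λ) = m_i(μ) + 1 for i ∈ I and m_j(μ) = m_j(λ) + 1 for j ∈ J. -/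
open scoped Classical

lemma lower_eq_Iio (S : Set ℕ) (hS : S.Finite) (hd : ∀ ⦃j k : ℕ⦄, j ≤ k → k ∈ S → j ∈ S) :
    S = Set.Iio S.ncard := by
  rcases S.eq_empty_or_nonempty with h | h
  · rw [h]; ext x; simp
  · obtain ⟨m, hm, hmax⟩ := Set.Finite.exists_maximalFor id S hS h
    have hEq : S = Set.Iic m := by
      ext x
      constructor
      · intro hx
        simp only [Set.mem_Iic]
        by_contra hc
        push_neg at hc
        have : (m : ℕ) = x := le_antisymm hc.le (hmax hx hc.le)
        omega
      · intro hx
        exact hd hx hm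
    have hcard : S.ncard = m + 1 := by
      rw [hEq, show Set.Iic m = ↑(Finset.Iic m) by simp, Set.ncard_coe_finset, Nat.card_Iic]
    rw [hcard, hEq]
    ext x; simp [Nat.lt_succ_iff]

lemma mem_iff_lt_ncard (a : ℕ → ℕ) (ha : Antitone a) (ha0 : ∀ᶠ j in Filter.atTop, a j = 0)
    (i : ℕ) (hi : 1 ≤ i) (j : ℕ) :
    i ≤ a j ↔ j < Set.ncard {j | i ≤ a j} := by
  obtain ⟨N, hN⟩ := Filter.eventually_atTop.mp ha0
  have hfin : {j | i ≤ a j}.Finite := by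
    apply Set.Finite.subset (Set.finite_Iio N)
    intro j hj
    by_contra hc
    have : a j = 0 := hN j (le_of_not_gt hc)
    simp only [Set.mem_setOf_eq, this] at hj
    omega
  have hd : ∀ ⦃j k : ℕ⦄, j ≤ k → k ∈ {j | i ≤ a j} → j ∈ {j | i ≤ a j} := by
    intro j k hjk hk
    exact le_trans hk (ha hjk)
  have := lower_eq_Iio _ hfin hd
  constructor
  · intro hj
    have : j ∈ Set.Iio ({j | i ≤ a j}.ncard) := this ▸ hj
    simpa using this
  · intro hj
    have hmem : j ∈ Set.Iio ({j | i ≤ a j}.ncard) := by simpa using hj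
    have : j ∈ {j | i ≤ a j} := this ▸ hmem
    exact this

lemma ncard_eq_sub (a : ℕ → ℕ) (ha : Antitone a) (ha0 : ∀ᶠ j in Filter.atTop, a j = 0)
    (i : ℕ) (hi : 1 ≤ i) :
    Set.ncard {j | a j = i}
      = Set.ncard {j | i ≤ a j} - Set.ncard {j | i + 1 ≤ a j} := by
  have h1 := mem_iff_lt_ncard a ha ha0 i hi
  have h2 := mem_iff_lt_ncard a ha ha0 (i + 1) (by omega)
  have hset : {j | a j = i} = Set.Ico (Set.ncard {j | i + 1 ≤ a j}) (Set.ncard {j | i ≤ a j}) := by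
    ext j
    have e1 := h1 j
    have e2 := h2 j
    simp only [Set.mem_setOf_eq, Set.mem_Ico]
    omega
  rw [hset, show Set.Ico (Set.ncard {j | i + 1 ≤ a j}) (Set.ncard {j | i ≤ a j})
      = ↑(Finset.Ico (Set.ncard {j | i + 1 ≤ a j}) (Set.ncard {j | i ≤ a j})) by simp,
    Set.ncard_coe_finset, Nat.card_Ico]

theorem stmt_19 (lam mu : ℕ → ℕ)
    (hlam : Antitone lam) (hmu : Antitone mu)
    (hlam0 : ∀ᶠ j in Filter.atTop, lam j = 0) (hmu0 : ∀ᶠ j in Filter.atTop, mu j = 0)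
    (hstrip : ∀ i, mu i ≤ lam i ∧ lam (i + 1) ≤ mu i) :
    ∀ i : ℕ, 1 ≤ i →
      (Set.ncard {j | lam j = i} - Set.ncard {j | mu j = i}
        = if Set.ncard {j | i + 1 ≤ lam j} = Set.ncard {j | i + 1 ≤ mu j} ∧
             Set.ncard {j | i ≤ mu j} < Set.ncard {j | i ≤ lam j} then 1 else 0) ∧
      (Set.ncard {j | mu j = i} - Set.ncard {j | lam j = i}
        = if Set.ncard {j | i + 1 ≤ mu j} < Set.ncard {j | i + 1 ≤ lam j} ∧
             Set.ncard {j | i ≤ lam j} = Set.ncard {j | i ≤ mu j} then 1 else 0) ∧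
      ((Set.ncard {j | i + 1 ≤ lam j} = Set.ncard {j | i + 1 ≤ mu j} ∧
          Set.ncard {j | i ≤ mu j} < Set.ncard {j | i ≤ lam j}) →
        Set.ncard {j | lam j = i} = Set.ncard {j | mu j = i} + 1) ∧
      ((Set.ncard {j | i + 1 ≤ mu j} < Set.ncard {j | i + 1 ≤ lam j} ∧
          Set.ncard {j | i ≤ lam j} = Set.ncard {j | i ≤ mu j}) →
        Set.ncard {j | mu j = i} = Set.ncard {j | lam j = i} + 1) := by
  intro i hi
  -- key counting facts
  have key : ∀ k : ℕ, 1 ≤ k →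
      Set.ncard {j | k ≤ mu j} ≤ Set.ncard {j | k ≤ lam j} ∧
      Set.ncard {j | k ≤ lam j} ≤ Set.ncard {j | k ≤ mu j} + 1 := by
    intro k hk
    have hL := mem_iff_lt_ncard lam hlam hlam0 k hk
    have hM := mem_iff_lt_ncard mu hmu hmu0 k hk
    constructor
    · by_contra hc
      push_neg at hc
      have h1 : k ≤ mu (Set.ncard {j | k ≤ lam j}) := (hM _).mpr hc
      have h2 : k ≤ lam (Set.ncard {j | k ≤ lam j}) := le_trans h1 (hstrip _).1
      have := (hL _).mp h2
      omega
    · by_contra hc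
      push_neg at hc
      -- hc : M_k + 1 < L_k, so M_k + 1 ∈ {k ≤ lam j}, k ≤ lam (M_k + 1) ≤ mu M_k,
      -- so M_k ∈ {k ≤ mu j}, so M_k < M_k.
      have h1 : k ≤ lam (Set.ncard {j | k ≤ mu j} + 1) := (hL _).mpr hc
      have h2 : k ≤ mu (Set.ncard {j | k ≤ mu j}) := le_trans h1 (hstrip _).2
      have := (hM _).mp h2
      omega
  obtain ⟨hA, hB⟩ := key i hi
  obtain ⟨hC, hD⟩ := key (i + 1) (by omega)
  have hLmono : Set.ncard {j | i + 1 ≤ lam j} ≤ Set.ncard {j | i ≤ lam j} := by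
    have h1 := mem_iff_lt_ncard lam hlam hlam0 i hi
    have h2 := mem_iff_lt_ncard lam hlam hlam0 (i + 1) (by omega)
    by_contra hc
    push_neg at hc
    have h3 : i + 1 ≤ lam (Set.ncard {j | i ≤ lam j}) := (h2 _).mpr hc
    have : i ≤ lam (Set.ncard {j | i ≤ lam j}) := by omega
    have := (h1 _).mp this
    omega
  have hMmono : Set.ncard {j | i + 1 ≤ mu j} ≤ Set.ncard {j | i ≤ mu j} := by
    have h1 := mem_iff_lt_ncard mu hmu hmu0 i hi
    have h2 := mem_iff_lt_ncard mu hmu hmu0 (i + 1) (by omega)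
    by_contra hc
    push_neg at hc
    have h3 : i + 1 ≤ mu (Set.ncard {j | i ≤ mu j}) := (h2 _).mpr hc
    have : i ≤ mu (Set.ncard {j | i ≤ mu j}) := by omega
    have := (h1 _).mp this
    omega
  rw [ncard_eq_sub lam hlam hlam0 i hi, ncard_eq_sub mu hmu hmu0 i hi]
  refine ⟨?_, ?_, ?_, ?_⟩ <;> [split_ifs with h; split_ifs with h; intro h; intro h] <;> omega
end
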